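/- arXiv:1004.4012 — 4 statements merged into one kernel-verified Lean document; each statement's English description precedes it below -/
import Mathlib

section
/- Fix d ≥ 2 and constants c_1, c_2, C_1 > 0. There exists a constant C > 0 depending only on d, c_1, c_2, C_1 with the following property. Let F_q be a finite field with q elements, χ : F_q → ℂ a nontrivial additive character, P ∈ F_q[x_1,…,x_d] a polynomial, and for t ∈ F_q set V_t = { x ∈ F_q^d : P(x) = t }. Suppose there is a set T ⊆ F_q such that: (i) c_1 q^{d−1} ≤ |V_t| ≤ c_2 q^{d−1} for all t ∈ F_q \ T, and (ii) |∑_{x ∈ V_t} χ(−x·m)| ≤ C_1 q^{(d−1)/2} for all t ∈ F_q \ T and all m ∈ F_q^d \ {0}. Then for all sets E, F ⊆ F_q^d with |E|·|F| ≥ C q^{d+1}, the distance set satisfies |Δ_P(E,F)| ≥ q − |T|. -/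
open Finset

set_option maxHeartbeats 1000000
set_option linter.unusedSectionVars false

namespace Stmt1Aux

variable {K : Type} [Field K] [Fintype K] [DecidableEq K] {d : ℕ}

lemma char_sum_eq_prod {ι : Type*} (χ : AddChar K ℂ) (s : Finset ι) (g : ι → K) :
    χ (∑ i ∈ s, g i) = ∏ i ∈ s, χ (g i) := by
  induction s using Finset.cons_induction with
  | empty => simp
  | cons a s ha ih => rw [Finset.sum_cons, Finset.prod_cons, AddChar.map_add_eq_mul, ih]

lemma single_orth (χ : AddChar K ℂ) (hχ : χ ≠ 1) (a : K) :
    ∑ x : K, χ (a * x) = if a = 0 then (Fintype.card K : ℂ) else 0 := by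
  split_ifs with h
  · simp [h, Finset.card_univ]
  · have hprim := AddChar.IsPrimitive.of_ne_one hχ h
    have h1 : (χ.mulShift a) ≠ 0 := by rw [← AddChar.one_eq_zero]; exact hprim
    have h2 := AddChar.sum_eq_zero_iff_ne_zero.mpr h1
    simpa [AddChar.mulShift_apply] using h2

lemma orth (χ : AddChar K ℂ) (hχ : χ ≠ 1) (z : Fin d → K) :
    ∑ m : Fin d → K, χ (∑ i, z i * m i) =
      if z = 0 then ((Fintype.card K : ℂ)) ^ d else 0 := by
  have h1 : ∀ m : Fin d → K, χ (∑ i, z i * m i) = ∏ i, χ (z i * m i) :=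
    fun m => char_sum_eq_prod χ univ _
  simp_rw [h1]
  have h2 : ∑ m ∈ Fintype.piFinset (fun _ : Fin d => (univ : Finset K)),
      ∏ i, χ (z i * m i) = ∏ i : Fin d, ∑ x : K, χ (z i * x) :=
    (Finset.prod_univ_sum (fun _ : Fin d => (univ : Finset K)) (fun i x => χ (z i * x))).symm
  rw [Fintype.piFinset_univ] at h2
  rw [h2]
  simp_rw [single_orth χ hχ]
  by_cases hz : z = 0
  · simp [hz]
  · obtain ⟨i, hi⟩ : ∃ i, z i ≠ 0 := by
      by_contra h; push_neg at h; exact hz (funext h)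
    rw [if_neg hz]
    exact Finset.prod_eq_zero (Finset.mem_univ i) (by simp [hi])

lemma key (χ : AddChar K ℂ) (hχ : χ ≠ 1) (E F V : Finset (Fin d → K)) :
    ∑ m : Fin d → K, ((∑ x ∈ E, χ (∑ i, x i * m i)) *
        ((∑ y ∈ F, χ (-(∑ i, y i * m i))) * (∑ v ∈ V, χ (-(∑ i, v i * m i))))) =
      (Fintype.card K : ℂ) ^ d *
        (((E ×ˢ F).filter (fun p => p.1 - p.2 ∈ V)).card : ℂ) := by
  have hpoint : ∀ (x y v m : Fin d → K),
      χ (∑ i, x i * m i) * (χ (-(∑ i, y i * m i)) * χ (-(∑ i, v i * m i))) =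
        χ (∑ i, (x - y - v) i * m i) := by
    intro x y v m
    rw [← AddChar.map_add_eq_mul, ← AddChar.map_add_eq_mul]
    congr 1
    have h : ∑ i, (x - y - v) i * m i
        = ∑ i, (x i * m i + (-(y i * m i) + -(v i * m i))) :=
      Finset.sum_congr rfl fun i _ => by simp [Pi.sub_apply]; ring
    rw [h, Finset.sum_add_distrib, Finset.sum_add_distrib,
      Finset.sum_neg_distrib, Finset.sum_neg_distrib]
  calc
    ∑ m : Fin d → K, ((∑ x ∈ E, χ (∑ i, x i * m i)) *
        ((∑ y ∈ F, χ (-(∑ i, y i * m i))) * (∑ v ∈ V, χ (-(∑ i, v i * m i)))))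
      = ∑ m : Fin d → K, ∑ x ∈ E, ∑ y ∈ F, ∑ v ∈ V, χ (∑ i, (x - y - v) i * m i) := by
        refine Finset.sum_congr rfl fun m _ => ?_
        rw [Finset.sum_mul_sum, Finset.sum_mul]
        simp_rw [Finset.mul_sum]
        exact Finset.sum_congr rfl fun x _ => Finset.sum_congr rfl fun y _ =>
          Finset.sum_congr rfl fun v _ => hpoint x y v m
    _ = ∑ x ∈ E, ∑ y ∈ F, ∑ v ∈ V, ∑ m : Fin d → K, χ (∑ i, (x - y - v) i * m i) := by
        rw [Finset.sum_comm]
        refine Finset.sum_congr rfl fun x _ => ?_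
        rw [Finset.sum_comm]
        refine Finset.sum_congr rfl fun y _ => ?_
        rw [Finset.sum_comm]
    _ = ∑ x ∈ E, ∑ y ∈ F, ∑ v ∈ V,
        (if v = x - y then ((Fintype.card K : ℂ)) ^ d else 0) := by
        refine Finset.sum_congr rfl fun x _ => Finset.sum_congr rfl fun y _ =>
          Finset.sum_congr rfl fun v _ => ?_
        rw [orth χ hχ (x - y - v)]
        by_cases h : v = x - y
        · rw [if_pos (by rw [h]; abel), if_pos h]
        · rw [if_neg (fun h0 => h (by rw [sub_eq_zero] at h0; exact h0.symm)), if_neg h]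
    _ = ∑ x ∈ E, ∑ y ∈ F, (if x - y ∈ V then ((Fintype.card K : ℂ)) ^ d else 0) := by
        refine Finset.sum_congr rfl fun x _ => Finset.sum_congr rfl fun y _ => ?_
        exact Finset.sum_ite_eq' V (x - y) _
    _ = ∑ p ∈ E ×ˢ F, (if p.1 - p.2 ∈ V then ((Fintype.card K : ℂ)) ^ d else 0) :=
        (Finset.sum_product (s := E) (t := F)
          (f := fun p => if p.1 - p.2 ∈ V then ((Fintype.card K : ℂ)) ^ d else 0)).symm
    _ = (Fintype.card K : ℂ) ^ d *
        (((E ×ˢ F).filter (fun p => p.1 - p.2 ∈ V)).card : ℂ) := by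
        rw [← Finset.sum_filter, Finset.sum_const, nsmul_eq_mul, mul_comm]

lemma parseval (χ : AddChar K ℂ) (hχ : χ ≠ 1) (E : Finset (Fin d → K)) :
    ∑ m : Fin d → K, ‖∑ x ∈ E, χ (∑ i, x i * m i)‖ ^ 2 =
      (Fintype.card K : ℝ) ^ d * (E.card : ℝ) := by
  have hpoint : ∀ (x x' m : Fin d → K),
      χ (∑ i, x i * m i) * χ (-(∑ i, x' i * m i)) = χ (∑ i, (x - x') i * m i) := by
    intro x x' m
    rw [← AddChar.map_add_eq_mul]
    congr 1
    have h : ∑ i, (x - x') i * m i = ∑ i, (x i * m i + -(x' i * m i)) :=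
      Finset.sum_congr rfl fun i _ => by simp [Pi.sub_apply]; ring
    rw [h, Finset.sum_add_distrib, Finset.sum_neg_distrib]
  have hc : ∑ m : Fin d → K, ((∑ x ∈ E, χ (∑ i, x i * m i)) *
      (∑ x' ∈ E, χ (-(∑ i, x' i * m i)))) =
      (Fintype.card K : ℂ) ^ d * (E.card : ℂ) := by
    calc
      ∑ m : Fin d → K, ((∑ x ∈ E, χ (∑ i, x i * m i)) *
          (∑ x' ∈ E, χ (-(∑ i, x' i * m i))))
        = ∑ m : Fin d → K, ∑ x ∈ E, ∑ x' ∈ E, χ (∑ i, (x - x') i * m i) := by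
          refine Finset.sum_congr rfl fun m _ => ?_
          rw [Finset.sum_mul_sum]
          exact Finset.sum_congr rfl fun x _ => Finset.sum_congr rfl fun x' _ =>
            hpoint x x' m
      _ = ∑ x ∈ E, ∑ x' ∈ E, ∑ m : Fin d → K, χ (∑ i, (x - x') i * m i) := by
          rw [Finset.sum_comm]
          refine Finset.sum_congr rfl fun x _ => ?_
          rw [Finset.sum_comm]
      _ = ∑ x ∈ E, ∑ x' ∈ E, (if x' = x then ((Fintype.card K : ℂ)) ^ d else 0) := by
          refine Finset.sum_congr rfl fun x _ => Finset.sum_congr rfl fun x' _ => ?_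
          rw [orth χ hχ (x - x')]
          by_cases h : x' = x
          · rw [if_pos (by rw [h]; abel), if_pos h]
          · rw [if_neg (fun h0 => h (by rw [sub_eq_zero] at h0; exact h0.symm)), if_neg h]
      _ = ∑ x ∈ E, ((Fintype.card K : ℂ)) ^ d := by
          refine Finset.sum_congr rfl fun x hx => ?_
          rw [Finset.sum_ite_eq' E x _, if_pos hx]
      _ = (Fintype.card K : ℂ) ^ d * (E.card : ℂ) := by
          rw [Finset.sum_const, nsmul_eq_mul, mul_comm]
  have hconj : ∀ m : Fin d → K, (∑ x' ∈ E, χ (-(∑ i, x' i * m i))) =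
      (starRingEnd ℂ) (∑ x ∈ E, χ (∑ i, x i * m i)) := by
    intro m
    rw [map_sum]
    exact Finset.sum_congr rfl fun x _ => AddChar.map_neg_eq_conj χ _
  have hc2 : ∑ m : Fin d → K, ((‖∑ x ∈ E, χ (∑ i, x i * m i)‖ : ℂ)) ^ 2 =
      (Fintype.card K : ℂ) ^ d * (E.card : ℂ) := by
    rw [← hc]
    exact Finset.sum_congr rfl fun m _ => by rw [hconj m, Complex.mul_conj']
  exact_mod_cast hc2

lemma norm_neg_sum (χ : AddChar K ℂ) (F : Finset (Fin d → K)) (m : Fin d → K) :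
    ‖∑ y ∈ F, χ (-(∑ i, y i * m i))‖ = ‖∑ y ∈ F, χ (∑ i, y i * m i)‖ := by
  have h : (∑ y ∈ F, χ (-(∑ i, y i * m i))) =
      (starRingEnd ℂ) (∑ y ∈ F, χ (∑ i, y i * m i)) := by
    rw [map_sum]
    exact Finset.sum_congr rfl fun y _ => AddChar.map_neg_eq_conj χ _
  rw [h, RCLike.norm_conj]

lemma cs_bound (χ : AddChar K ℂ) (hχ : χ ≠ 1) (E F : Finset (Fin d → K)) :
    ∑ m : Fin d → K, ‖∑ x ∈ E, χ (∑ i, x i * m i)‖ * ‖∑ y ∈ F, χ (∑ i, y i * m i)‖ ≤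
      (Fintype.card K : ℝ) ^ d * Real.sqrt ((E.card : ℝ) * (F.card : ℝ)) := by
  have hsq := Finset.sum_mul_sq_le_sq_mul_sq Finset.univ
    (fun m : Fin d → K => ‖∑ x ∈ E, χ (∑ i, x i * m i)‖)
    (fun m : Fin d → K => ‖∑ y ∈ F, χ (∑ i, y i * m i)‖)
  rw [parseval χ hχ E, parseval χ hχ F] at hsq
  have hR : ((Fintype.card K : ℝ) ^ d * (E.card : ℝ)) *
      ((Fintype.card K : ℝ) ^ d * (F.card : ℝ)) =
      ((Fintype.card K : ℝ) ^ d * Real.sqrt ((E.card : ℝ) * (F.card : ℝ))) ^ 2 := by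
    have : Real.sqrt ((E.card : ℝ) * (F.card : ℝ)) ^ 2 = (E.card : ℝ) * (F.card : ℝ) :=
      Real.sq_sqrt (by positivity)
    rw [mul_pow, this]; ring
  rw [hR] at hsq
  exact le_of_pow_le_pow_left₀ (two_ne_zero) (by positivity) hsq

lemma count_lower (χ : AddChar K ℂ) (hχ : χ ≠ 1) (E F V : Finset (Fin d → K)) (B : ℝ)
    (hB : 0 ≤ B)
    (hSbound : ∀ m : Fin d → K, m ≠ 0 → ‖∑ v ∈ V, χ (-(∑ i, v i * m i))‖ ≤ B) :
    (V.card : ℝ) * (E.card : ℝ) * (F.card : ℝ) -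
        B * ((Fintype.card K : ℝ) ^ d * Real.sqrt ((E.card : ℝ) * (F.card : ℝ))) ≤
      (Fintype.card K : ℝ) ^ d *
        ((((E ×ˢ F).filter (fun p => p.1 - p.2 ∈ V)).card : ℝ)) := by
  have hkey := key χ hχ E F V
  have hsplit : ∑ m : Fin d → K, ((∑ x ∈ E, χ (∑ i, x i * m i)) *
        ((∑ y ∈ F, χ (-(∑ i, y i * m i))) * (∑ v ∈ V, χ (-(∑ i, v i * m i))))) =
      ((∑ x ∈ E, χ (∑ i, x i * (0 : Fin d → K) i)) *
        ((∑ y ∈ F, χ (-(∑ i, y i * (0 : Fin d → K) i))) *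
          (∑ v ∈ V, χ (-(∑ i, v i * (0 : Fin d → K) i))))) +
      ∑ m ∈ Finset.univ.erase (0 : Fin d → K), ((∑ x ∈ E, χ (∑ i, x i * m i)) *
        ((∑ y ∈ F, χ (-(∑ i, y i * m i))) * (∑ v ∈ V, χ (-(∑ i, v i * m i))))) :=
    (Finset.add_sum_erase _ _ (Finset.mem_univ 0)).symm
  have hE0 : (∑ x ∈ E, χ (∑ i, x i * (0 : Fin d → K) i)) = (E.card : ℂ) := by simp
  have hF0 : (∑ y ∈ F, χ (-(∑ i, y i * (0 : Fin d → K) i))) = (F.card : ℂ) := by simp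
  have hV0 : (∑ v ∈ V, χ (-(∑ i, v i * (0 : Fin d → K) i))) = (V.card : ℂ) := by simp
  set N : ℕ := ((E ×ˢ F).filter (fun p => p.1 - p.2 ∈ V)).card with hN
  have hrem : ∑ m ∈ Finset.univ.erase (0 : Fin d → K), ((∑ x ∈ E, χ (∑ i, x i * m i)) *
        ((∑ y ∈ F, χ (-(∑ i, y i * m i))) * (∑ v ∈ V, χ (-(∑ i, v i * m i))))) =
      (Fintype.card K : ℂ) ^ d * (N : ℂ) -
        (E.card : ℂ) * ((F.card : ℂ) * (V.card : ℂ)) := by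
    rw [← hkey, hsplit, hE0, hF0, hV0]; ring
  -- bound the remainder
  have hnormbound : ‖∑ m ∈ Finset.univ.erase (0 : Fin d → K),
      ((∑ x ∈ E, χ (∑ i, x i * m i)) *
        ((∑ y ∈ F, χ (-(∑ i, y i * m i))) * (∑ v ∈ V, χ (-(∑ i, v i * m i)))))‖ ≤
      B * ((Fintype.card K : ℝ) ^ d * Real.sqrt ((E.card : ℝ) * (F.card : ℝ))) := by
    calc
      ‖∑ m ∈ Finset.univ.erase (0 : Fin d → K), ((∑ x ∈ E, χ (∑ i, x i * m i)) *
          ((∑ y ∈ F, χ (-(∑ i, y i * m i))) * (∑ v ∈ V, χ (-(∑ i, v i * m i)))))‖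
        ≤ ∑ m ∈ Finset.univ.erase (0 : Fin d → K), ‖(∑ x ∈ E, χ (∑ i, x i * m i)) *
          ((∑ y ∈ F, χ (-(∑ i, y i * m i))) * (∑ v ∈ V, χ (-(∑ i, v i * m i))))‖ :=
          norm_sum_le _ _
      _ ≤ ∑ m ∈ Finset.univ.erase (0 : Fin d → K),
          B * (‖∑ x ∈ E, χ (∑ i, x i * m i)‖ * ‖∑ y ∈ F, χ (-(∑ i, y i * m i))‖) := by
          refine Finset.sum_le_sum fun m hm => ?_
          have hm0 : m ≠ 0 := Finset.ne_of_mem_erase hm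
          rw [norm_mul, norm_mul]
          have h1 := hSbound m hm0
          calc ‖∑ x ∈ E, χ (∑ i, x i * m i)‖ *
              (‖∑ y ∈ F, χ (-(∑ i, y i * m i))‖ * ‖∑ v ∈ V, χ (-(∑ i, v i * m i))‖)
              ≤ ‖∑ x ∈ E, χ (∑ i, x i * m i)‖ *
                (‖∑ y ∈ F, χ (-(∑ i, y i * m i))‖ * B) := by
                refine mul_le_mul_of_nonneg_left ?_ (norm_nonneg _)
                exact mul_le_mul_of_nonneg_left h1 (norm_nonneg _)
            _ = B * (‖∑ x ∈ E, χ (∑ i, x i * m i)‖ * ‖∑ y ∈ F, χ (-(∑ i, y i * m i))‖) := by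
                ring
      _ = B * ∑ m ∈ Finset.univ.erase (0 : Fin d → K),
          ‖∑ x ∈ E, χ (∑ i, x i * m i)‖ * ‖∑ y ∈ F, χ (-(∑ i, y i * m i))‖ := by
          rw [Finset.mul_sum]
      _ ≤ B * ∑ m : Fin d → K,
          ‖∑ x ∈ E, χ (∑ i, x i * m i)‖ * ‖∑ y ∈ F, χ (-(∑ i, y i * m i))‖ := by
          refine mul_le_mul_of_nonneg_left ?_ hB
          refine Finset.sum_le_sum_of_subset_of_nonneg
            (Finset.erase_subset _ _) fun m _ _ => by positivity
      _ ≤ B * ((Fintype.card K : ℝ) ^ d * Real.sqrt ((E.card : ℝ) * (F.card : ℝ))) := by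
          refine mul_le_mul_of_nonneg_left ?_ hB
          have h2 : ∀ m : Fin d → K,
              ‖∑ x ∈ E, χ (∑ i, x i * m i)‖ * ‖∑ y ∈ F, χ (-(∑ i, y i * m i))‖ =
              ‖∑ x ∈ E, χ (∑ i, x i * m i)‖ * ‖∑ y ∈ F, χ (∑ i, y i * m i)‖ := by
            intro m; rw [norm_neg_sum χ F m]
          simp_rw [h2]
          exact cs_bound χ hχ E F
  have hcast : (((Fintype.card K : ℝ) ^ d * (N : ℝ) -
      (V.card : ℝ) * (E.card : ℝ) * (F.card : ℝ) : ℝ) : ℂ) =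
      ∑ m ∈ Finset.univ.erase (0 : Fin d → K), ((∑ x ∈ E, χ (∑ i, x i * m i)) *
        ((∑ y ∈ F, χ (-(∑ i, y i * m i))) * (∑ v ∈ V, χ (-(∑ i, v i * m i))))) := by
    rw [hrem]; push_cast; ring
  have habs : |(Fintype.card K : ℝ) ^ d * (N : ℝ) -
      (V.card : ℝ) * (E.card : ℝ) * (F.card : ℝ)| ≤
      B * ((Fintype.card K : ℝ) ^ d * Real.sqrt ((E.card : ℝ) * (F.card : ℝ))) := by
    have h3 := hnormbound
    rw [← hcast] at h3
    rwa [Complex.norm_real, Real.norm_eq_abs] at h3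
  have h4 := (abs_le.mp habs).1
  linarith

end Stmt1Aux

/-- A generalized Falconer distance formula. If the varieties
`V_t = {x : P(x) = t}` have size `≍ q^{d-1}` and Fourier decay `q^{(d-1)/2}`
for all `t` outside an exceptional set `T`, then `|E||F| ≥ C q^{d+1}` implies
`|Δ_P(E,F)| ≥ q - |T|`. -/
theorem stmt1 (d : ℕ) (hd : 2 ≤ d) (c₁ c₂ C₁ : ℝ)
    (hc₁ : 0 < c₁) (hc₂ : 0 < c₂) (hC₁ : 0 < C₁) :
    ∃ C : ℝ, 0 < C ∧
      ∀ (K : Type) [Field K] [Fintype K] [DecidableEq K]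
        (χ : AddChar K ℂ), χ ≠ 1 →
        ∀ (P : MvPolynomial (Fin d) K) (T : Finset K),
          (∀ t ∉ T,
            c₁ * (Fintype.card K : ℝ) ^ (d - 1) ≤
              ((Finset.univ.filter
                (fun x : Fin d → K => MvPolynomial.eval x P = t)).card : ℝ) ∧
            ((Finset.univ.filter
                (fun x : Fin d → K => MvPolynomial.eval x P = t)).card : ℝ) ≤
              c₂ * (Fintype.card K : ℝ) ^ (d - 1)) →
          (∀ t ∉ T, ∀ m : Fin d → K, m ≠ 0 →
            ‖(∑ x ∈ Finset.univ.filter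
                  (fun x : Fin d → K => MvPolynomial.eval x P = t),
                χ (-(∑ i, x i * m i)))‖ ≤
              C₁ * (Fintype.card K : ℝ) ^ (((d : ℝ) - 1) / 2)) →
          ∀ E F : Finset (Fin d → K),
            C * (Fintype.card K : ℝ) ^ (d + 1) ≤ (E.card : ℝ) * (F.card : ℝ) →
            (Fintype.card K : ℝ) - (T.card : ℝ) ≤
              (((E ×ˢ F).image
                (fun p => MvPolynomial.eval (p.1 - p.2) P)).card : ℝ) := by
  refine ⟨4 * C₁ ^ 2 / c₁ ^ 2 + 1, by positivity, ?_⟩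
  intro K _ _ _ χ hχ P T hV hS E F hEF
  set Q : ℝ := (Fintype.card K : ℝ) with hQdef
  have hQ0 : 0 < Q := by
    rw [hQdef]; exact_mod_cast Fintype.card_pos
  -- main claim: every t ∉ T is attained
  have hmain : ∀ t ∉ T, ∃ p ∈ E ×ˢ F, MvPolynomial.eval (p.1 - p.2) P = t := by
    intro t ht
    set V : Finset (Fin d → K) :=
      Finset.univ.filter (fun x : Fin d → K => MvPolynomial.eval x P = t) with hVdef
    have hSb : ∀ m : Fin d → K, m ≠ 0 →
        ‖∑ v ∈ V, χ (-(∑ i, v i * m i))‖ ≤ C₁ * Q ^ (((d : ℝ) - 1) / 2) := by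
      intro m hm
      have := hS t ht m hm
      exact this
    have hcl := Stmt1Aux.count_lower χ hχ E F V (C₁ * Q ^ (((d : ℝ) - 1) / 2))
      (by positivity) hSb
    -- identify the two filtered sets
    have hfilt : (E ×ˢ F).filter (fun p => p.1 - p.2 ∈ V) =
        (E ×ˢ F).filter (fun p => MvPolynomial.eval (p.1 - p.2) P = t) := by
      apply Finset.filter_congr
      intro p _
      simp [hVdef]
    rw [hfilt] at hcl
    set N : ℕ := ((E ×ˢ F).filter
      (fun p => MvPolynomial.eval (p.1 - p.2) P = t)).card with hNdef
    -- numerics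
    set A : ℝ := Real.sqrt ((E.card : ℝ) * (F.card : ℝ)) with hAdef
    have hA0 : 0 ≤ A := Real.sqrt_nonneg _
    have hA2 : A ^ 2 = (E.card : ℝ) * (F.card : ℝ) := Real.sq_sqrt (by positivity)
    have hd1 : ((d - 1 : ℕ) : ℝ) = (d : ℝ) - 1 := by
      rw [Nat.cast_sub (by omega : 1 ≤ d)]; norm_num
    have hd2 : ((d + 1 : ℕ) : ℝ) = (d : ℝ) + 1 := by push_cast; ring
    -- rpow versions
    have hQn1 : Q ^ (d - 1) = Q ^ ((d : ℝ) - 1) := by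
      rw [← Real.rpow_natCast Q (d - 1), hd1]
    have hQd : Q ^ d = Q ^ (d : ℝ) := by rw [← Real.rpow_natCast Q d]
    have hQd1 : Q ^ (d + 1) = Q ^ ((d : ℝ) + 1) := by
      rw [← Real.rpow_natCast Q (d + 1), hd2]
    have hf1 : Q ^ (d - 1) * Q ^ (((d : ℝ) + 1) / 2) =
        Q ^ (((d : ℝ) - 1) / 2) * Q ^ d := by
      rw [hQn1, hQd, ← Real.rpow_add hQ0, ← Real.rpow_add hQ0]
      congr 1
      ring
    have hf2 : (Q ^ (((d : ℝ) + 1) / 2)) ^ 2 = Q ^ (d + 1) := by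
      rw [hQd1, ← Real.rpow_natCast (Q ^ (((d : ℝ) + 1) / 2)) 2,
        ← Real.rpow_mul hQ0.le]
      norm_num
    have hQr0 : 0 < Q ^ (((d : ℝ) + 1) / 2) := Real.rpow_pos_of_pos hQ0 _
    have hQh0 : 0 < Q ^ (((d : ℝ) - 1) / 2) := Real.rpow_pos_of_pos hQ0 _
    have hQnd0 : 0 < Q ^ (d - 1) := pow_pos hQ0 _
    have hQdd0 : 0 < Q ^ d := pow_pos hQ0 _
    have hQd1pos : 0 < Q ^ (d + 1) := pow_pos hQ0 _
    -- A is big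
    have hAbig : 2 * (C₁ / c₁) * Q ^ (((d : ℝ) + 1) / 2) < A := by
      refine lt_of_pow_lt_pow_left₀ 2 hA0 ?_
      have he : (2 * (C₁ / c₁) * Q ^ (((d : ℝ) + 1) / 2)) ^ 2 =
          4 * C₁ ^ 2 / c₁ ^ 2 * Q ^ (d + 1) := by
        rw [mul_pow, mul_pow, hf2]
        field_simp
        ring
      rw [he, hA2]
      calc 4 * C₁ ^ 2 / c₁ ^ 2 * Q ^ (d + 1)
          < (4 * C₁ ^ 2 / c₁ ^ 2 + 1) * Q ^ (d + 1) := by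
            refine mul_lt_mul_of_pos_right ?_ hQd1pos
            linarith
        _ ≤ (E.card : ℝ) * (F.card : ℝ) := hEF
    have hApos : 0 < A := lt_trans (by positivity) hAbig
    -- main-term lower bound
    obtain ⟨hV1, _⟩ := hV t ht
    have hE0 : (0 : ℝ) ≤ (E.card : ℝ) := by positivity
    have hF0 : (0 : ℝ) ≤ (F.card : ℝ) := by positivity
    have hmainlow : c₁ * Q ^ (d - 1) * A ^ 2 ≤
        (V.card : ℝ) * (E.card : ℝ) * (F.card : ℝ) := by
      rw [hA2]
      have := mul_le_mul_of_nonneg_right hV1 (mul_nonneg hE0 hF0)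
      calc c₁ * Q ^ (d - 1) * ((E.card : ℝ) * (F.card : ℝ))
          ≤ (V.card : ℝ) * ((E.card : ℝ) * (F.card : ℝ)) := this
        _ = (V.card : ℝ) * (E.card : ℝ) * (F.card : ℝ) := by ring
    -- gap
    have hgap : C₁ * Q ^ (((d : ℝ) - 1) / 2) * (Q ^ d * A) <
        c₁ * Q ^ (d - 1) * A ^ 2 := by
      have e1 : c₁ * Q ^ (d - 1) * (2 * (C₁ / c₁) * Q ^ (((d : ℝ) + 1) / 2)) =
          2 * C₁ * (Q ^ (((d : ℝ) - 1) / 2) * Q ^ d) := by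
        rw [← hf1]
        field_simp
      have step : c₁ * Q ^ (d - 1) * (2 * (C₁ / c₁) * Q ^ (((d : ℝ) + 1) / 2)) * A <
          c₁ * Q ^ (d - 1) * A * A := by
        refine mul_lt_mul_of_pos_right ?_ hApos
        exact mul_lt_mul_of_pos_left hAbig (by positivity)
      rw [e1] at step
      nlinarith [mul_pos (mul_pos hQh0 hQdd0) hApos]
    -- conclude N > 0
    have hNpos : 0 < N := by
      by_contra hN0
      push_neg at hN0
      interval_cases N
      · simp only [Nat.cast_zero, mul_zero] at hcl
        linarith
    obtain ⟨p, hp⟩ := Finset.card_pos.mp hNpos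
    rw [Finset.mem_filter] at hp
    exact ⟨p, hp.1, hp.2⟩
  -- wrap up
  have hsubset : Tᶜ ⊆ (E ×ˢ F).image (fun p => MvPolynomial.eval (p.1 - p.2) P) := by
    intro t ht
    rw [Finset.mem_compl] at ht
    obtain ⟨p, hp1, hp2⟩ := hmain t ht
    exact Finset.mem_image.mpr ⟨p, hp1, hp2⟩
  have h5 : ((Tᶜ.card : ℕ) : ℝ) ≤
      (((E ×ˢ F).image (fun p => MvPolynomial.eval (p.1 - p.2) P)).card : ℝ) :=
    Nat.cast_le.mpr (Finset.card_le_card hsubset)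
  rw [Finset.card_compl, Nat.cast_sub (Finset.card_le_univ T)] at h5
  exact h5
end

section
/- Fix an integer d ≥ 1 and a constant A > 0. There exist constants C > 0 and c > 0 depending only on d and A with the following property. Let F_q be a finite field with q elements, χ : F_q → ℂ a nontrivial additive character, and P ∈ F_q[x_1,…,x_d] a polynomial such that for every m ∈ F_q^d and every s ∈ F_q \ {0}, |∑_{x ∈ F_q^d} χ( s·P(x) + m·x )| ≤ A q^{d/2}. Then for all sets E, F ⊆ F_q^d with |E|·|F| ≥ C q^{d+1}, the distance set satisfies |Δ_P(E,F)| ≥ c q. -/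
open Finset

namespace Stmt5Aux

variable {d : ℕ} {K : Type} [Field K] [Fintype K] [DecidableEq K]

lemma map_sum' (χ : AddChar K ℂ) {ι : Type*} (s : Finset ι) (f : ι → K) :
    χ (∑ i ∈ s, f i) = ∏ i ∈ s, χ (f i) := by
  induction s using Finset.cons_induction with
  | empty => simp
  | cons a s ha ih => rw [sum_cons, prod_cons, AddChar.map_add_eq_mul, ih]

lemma orth1 (χ : AddChar K ℂ) (hχ : χ ≠ 1) (a : K) :
    ∑ s : K, χ (s * a) = if a = 0 then (Fintype.card K : ℂ) else 0 :=
  by rw [AddChar.sum_mulShift a (AddChar.IsPrimitive.of_ne_one hχ)]; split <;> simp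

lemma orthV (χ : AddChar K ℂ) (hχ : χ ≠ 1) (z : Fin d → K) :
    ∑ m : Fin d → K, χ (∑ i, z i * m i) =
      if z = 0 then ((Fintype.card K : ℂ) ^ d) else 0 := by
  have h1 : ∑ m : Fin d → K, χ (∑ i, z i * m i)
      = ∑ m : Fin d → K, ∏ i, χ (z i * m i) := by
    exact Finset.sum_congr rfl fun m _ => map_sum' χ _ _
  have h0 := Finset.prod_univ_sum (fun _ : Fin d => (univ : Finset K)) (fun i x => χ (z i * x))
  rw [Fintype.piFinset_univ] at h0
  rw [h1, ← h0]
  have h2 : ∀ i : Fin d, ∑ x : K, χ (z i * x) = if z i = 0 then (Fintype.card K : ℂ) else 0 := by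
    intro i
    rw [← orth1 χ hχ (z i)]
    exact Finset.sum_congr rfl fun x _ => by rw [mul_comm]
  simp_rw [h2]
  by_cases hz : z = 0
  · simp [hz]
  · obtain ⟨i, hi⟩ : ∃ i, z i ≠ 0 := by
      by_contra h; push_neg at h; exact hz (funext h)
    rw [if_neg hz]
    exact Finset.prod_eq_zero (mem_univ i) (if_neg hi)

lemma planch (χ : AddChar K ℂ) (hχ : χ ≠ 1) (E : Finset (Fin d → K)) :
    ∑ m : Fin d → K, ‖∑ x ∈ E, χ (∑ i, x i * m i)‖ ^ 2
      = (Fintype.card K : ℝ) ^ d * E.card := by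
  have key : ∑ m : Fin d → K, (∑ x ∈ E, χ (∑ i, x i * m i)) *
      (starRingEnd ℂ) (∑ x ∈ E, χ (∑ i, x i * m i))
      = ((Fintype.card K : ℂ) ^ d) * E.card := by
    have expand : ∀ m : Fin d → K, (∑ x ∈ E, χ (∑ i, x i * m i)) *
        (starRingEnd ℂ) (∑ x ∈ E, χ (∑ i, x i * m i))
        = ∑ x ∈ E, ∑ y ∈ E, χ (∑ i, (x - y) i * m i) := by
      intro m
      rw [map_sum, Finset.sum_mul_sum]
      refine Finset.sum_congr rfl fun x _ => Finset.sum_congr rfl fun y _ => ?_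
      rw [← AddChar.map_neg_eq_conj, ← AddChar.map_add_eq_mul]
      congr 1
      rw [← Finset.sum_neg_distrib, ← Finset.sum_add_distrib]
      exact Finset.sum_congr rfl fun i _ => by simp only [Pi.sub_apply]; ring
    simp_rw [expand]
    rw [Finset.sum_comm (s := (univ : Finset (Fin d → K))) (t := E)
      (f := fun m x => ∑ y ∈ E, χ (∑ i, (x - y) i * m i))]
    have com2 : ∀ x ∈ E, ∑ m : Fin d → K, ∑ y ∈ E, χ (∑ i, (x - y) i * m i)
        = ∑ y ∈ E, ∑ m : Fin d → K, χ (∑ i, (x - y) i * m i) := fun x _ =>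
      Finset.sum_comm (s := (univ : Finset (Fin d → K))) (t := E)
        (f := fun m y => χ (∑ i, (x - y) i * m i))
    rw [Finset.sum_congr rfl com2]
    have swap : ∀ x : Fin d → K, ∑ y ∈ E, ∑ m : Fin d → K, χ (∑ i, (x - y) i * m i)
        = ∑ y ∈ E, if x - y = 0 then ((Fintype.card K : ℂ) ^ d) else 0 := fun x =>
      Finset.sum_congr rfl fun y _ => orthV χ hχ (x - y)
    have swap2 : ∀ x ∈ E, (∑ y ∈ E, ∑ m : Fin d → K, χ (∑ i, (x - y) i * m i))
        = ((Fintype.card K : ℂ) ^ d) := by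
      intro x hx
      rw [swap x]
      simp only [sub_eq_zero]
      rw [Finset.sum_ite_eq E x (fun _ => ((Fintype.card K : ℂ) ^ d)), if_pos hx]
    rw [Finset.sum_congr rfl swap2, Finset.sum_const, nsmul_eq_mul, mul_comm]
  have cast : ∀ m : Fin d → K,
      ((‖∑ x ∈ E, χ (∑ i, x i * m i)‖ ^ 2 : ℝ) : ℂ)
      = (∑ x ∈ E, χ (∑ i, x i * m i)) * (starRingEnd ℂ) (∑ x ∈ E, χ (∑ i, x i * m i)) := by
    intro m
    rw [Complex.mul_conj, Complex.sq_norm]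
  have : ((∑ m : Fin d → K, ‖∑ x ∈ E, χ (∑ i, x i * m i)‖ ^ 2 : ℝ) : ℂ)
      = (((Fintype.card K : ℝ) ^ d * E.card : ℝ) : ℂ) := by
    rw [Complex.ofReal_sum, Finset.sum_congr rfl (fun m _ => cast m), key]
    push_cast
    ring
  exact_mod_cast this


lemma inversion (χ : AddChar K ℂ) (hχ : χ ≠ 1) (P : MvPolynomial (Fin d) K)
    (s : K) (z : Fin d → K) :
    ∑ m : Fin d → K,
      (∑ w : Fin d → K, χ (s * MvPolynomial.eval w P - ∑ i, w i * m i)) * χ (∑ i, z i * m i)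
      = (Fintype.card K : ℂ) ^ d * χ (s * MvPolynomial.eval z P) := by
  simp_rw [Finset.sum_mul]
  rw [Finset.sum_comm (s := (univ : Finset (Fin d → K))) (t := (univ : Finset (Fin d → K)))
    (f := fun m w => χ (s * MvPolynomial.eval w P - ∑ i, w i * m i) * χ (∑ i, z i * m i))]
  have hterm : ∀ w m : Fin d → K,
      χ (s * MvPolynomial.eval w P - ∑ i, w i * m i) * χ (∑ i, z i * m i)
      = χ (s * MvPolynomial.eval w P) * χ (∑ i, (z - w) i * m i) := by
    intro w m
    rw [← AddChar.map_add_eq_mul, ← AddChar.map_add_eq_mul]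
    congr 1
    have : ∑ i, (z - w) i * m i = ∑ i, z i * m i - ∑ i, w i * m i := by
      rw [← Finset.sum_sub_distrib]
      exact Finset.sum_congr rfl fun i _ => by simp only [Pi.sub_apply]; ring
    rw [this]; ring
  simp_rw [hterm, ← Finset.mul_sum]
  have horth : ∀ w : Fin d → K, (∑ m : Fin d → K, χ (∑ i, (z - w) i * m i))
      = if z - w = 0 then ((Fintype.card K : ℂ) ^ d) else 0 := fun w => orthV χ hχ (z - w)
  simp_rw [horth, sub_eq_zero, mul_ite, mul_zero]
  rw [Finset.sum_ite_eq (univ : Finset (Fin d → K)) z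
    (fun w => χ (s * MvPolynomial.eval w P) * (Fintype.card K : ℂ) ^ d), if_pos (mem_univ z)]
  ring

lemma Wbound (χ : AddChar K ℂ) (hχ : χ ≠ 1) (P : MvPolynomial (Fin d) K) (A : ℝ)
    (hP : ∀ m : Fin d → K, ∀ s : K, s ≠ 0 →
      ‖∑ x : Fin d → K, χ (s * MvPolynomial.eval x P + ∑ i, x i * m i)‖ ≤
        A * (Fintype.card K : ℝ) ^ ((d : ℝ) / 2))
    (E F : Finset (Fin d → K)) (s : K) (hs : s ≠ 0) :
    (Fintype.card K : ℝ) ^ d *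
      ‖∑ p ∈ E ×ˢ F, χ (s * MvPolynomial.eval (p.1 - p.2) P)‖ ≤
      A * (Fintype.card K : ℝ) ^ ((d : ℝ) / 2) * ((Fintype.card K : ℝ) ^ d *
        Real.sqrt ((E.card : ℝ) * (F.card : ℝ))) := by
  classical
  set q : ℝ := (Fintype.card K : ℝ) with hq
  set Sf : (Fin d → K) → ℂ := fun m => ∑ w : Fin d → K,
    χ (s * MvPolynomial.eval w P - ∑ i, w i * m i) with hSf
  set Ef : (Fin d → K) → ℂ := fun m => ∑ x ∈ E, χ (∑ i, x i * m i) with hEf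
  set Ff : (Fin d → K) → ℂ := fun m => ∑ y ∈ F, χ (-∑ i, y i * m i) with hFf
  -- the key identity
  have key : (Fintype.card K : ℂ) ^ d * (∑ p ∈ E ×ˢ F, χ (s * MvPolynomial.eval (p.1 - p.2) P))
      = ∑ m : Fin d → K, Sf m * (Ef m * Ff m) := by
    rw [Finset.mul_sum]
    have step1 : ∀ p ∈ E ×ˢ F,
        (Fintype.card K : ℂ) ^ d * χ (s * MvPolynomial.eval (p.1 - p.2) P)
        = ∑ m : Fin d → K, Sf m * (χ (∑ i, p.1 i * m i) * χ (-∑ i, p.2 i * m i)) := by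
      intro p _
      rw [← inversion χ hχ P s (p.1 - p.2)]
      refine Finset.sum_congr rfl fun m _ => ?_
      congr 1
      rw [← AddChar.map_add_eq_mul]
      congr 1
      rw [← Finset.sum_neg_distrib, ← Finset.sum_add_distrib]
      exact Finset.sum_congr rfl fun i _ => by simp only [Pi.sub_apply]; ring
    rw [Finset.sum_congr rfl step1, Finset.sum_comm (s := E ×ˢ F) (t := univ)]
    refine Finset.sum_congr rfl fun m _ => ?_
    rw [← Finset.mul_sum]
    congr 1
    rw [Finset.sum_product, hEf, hFf]
    simp only [Finset.sum_mul_sum]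
  -- norm bound
  have hSbound : ∀ m : Fin d → K, ‖Sf m‖ ≤ A * q ^ ((d : ℝ) / 2) := by
    intro m
    have := hP (fun i => -(m i)) s hs
    have heq : (∑ x : Fin d → K, χ (s * MvPolynomial.eval x P + ∑ i, x i * (-(m i))))
        = Sf m := by
      refine Finset.sum_congr rfl fun w _ => ?_
      congr 1
      rw [sub_eq_add_neg, ← Finset.sum_neg_distrib]
      exact congrArg _ (Finset.sum_congr rfl fun i _ => by ring)
    rwa [heq] at this
  have habs : ‖(Fintype.card K : ℂ) ^ d *
      (∑ p ∈ E ×ˢ F, χ (s * MvPolynomial.eval (p.1 - p.2) P))‖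
      ≤ ∑ m : Fin d → K, ‖Sf m‖ * (‖Ef m‖ * ‖Ff m‖) := by
    rw [key]
    refine (norm_sum_le _ _).trans (le_of_eq ?_)
    exact Finset.sum_congr rfl fun m _ => by rw [norm_mul, norm_mul]
  have hCS : ∑ m : Fin d → K, ‖Ef m‖ * ‖Ff m‖
      ≤ q ^ d * Real.sqrt ((E.card : ℝ) * (F.card : ℝ)) := by
    have h1 := Real.sum_mul_le_sqrt_mul_sqrt (univ : Finset (Fin d → K))
      (fun m => ‖Ef m‖) (fun m => ‖Ff m‖)
    have hE2 : ∑ m : Fin d → K, ‖Ef m‖ ^ 2 = q ^ d * E.card := planch χ hχ E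
    have hF2 : ∑ m : Fin d → K, ‖Ff m‖ ^ 2 = q ^ d * F.card := by
      have : ∀ m : Fin d → K, ‖Ff m‖
          = ‖∑ y ∈ F, χ (∑ i, y i * m i)‖ := by
        intro m
        rw [hFf]
        simp only
        have : (∑ y ∈ F, χ (-∑ i, y i * m i))
            = (starRingEnd ℂ) (∑ y ∈ F, χ (∑ i, y i * m i)) := by
          rw [map_sum]
          exact Finset.sum_congr rfl fun y _ => AddChar.map_neg_eq_conj χ _
        rw [this, Complex.norm_conj]
      simp_rw [this]
      exact planch χ hχ F
    rw [hE2, hF2] at h1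
    refine h1.trans (le_of_eq ?_)
    rw [← Real.sqrt_mul (by positivity)]
    rw [show q ^ d * (E.card : ℝ) * (q ^ d * (F.card : ℝ))
        = (q ^ d) ^ 2 * ((E.card : ℝ) * (F.card : ℝ)) by ring]
    rw [Real.sqrt_mul (by positivity), Real.sqrt_sq (by positivity)]
  -- combine
  have hcombine : ∑ m : Fin d → K, ‖Sf m‖ * (‖Ef m‖ * ‖Ff m‖)
      ≤ A * q ^ ((d : ℝ) / 2) * (q ^ d * Real.sqrt ((E.card : ℝ) * (F.card : ℝ))) := by
    calc ∑ m : Fin d → K, ‖Sf m‖ * (‖Ef m‖ * ‖Ff m‖)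
        ≤ ∑ m : Fin d → K, A * q ^ ((d : ℝ) / 2) * (‖Ef m‖ * ‖Ff m‖) := by
          refine Finset.sum_le_sum fun m _ => ?_
          exact mul_le_mul_of_nonneg_right (hSbound m) (by positivity)
      _ = A * q ^ ((d : ℝ) / 2) * ∑ m : Fin d → K, ‖Ef m‖ * ‖Ff m‖ := by
          rw [Finset.mul_sum]
      _ ≤ A * q ^ ((d : ℝ) / 2) * (q ^ d * Real.sqrt ((E.card : ℝ) * (F.card : ℝ))) := by
          have hAq : 0 ≤ A * q ^ ((d : ℝ) / 2) := by
            have h0 := (norm_nonneg (Sf 0)).trans (hSbound 0)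
            exact h0
          exact mul_le_mul_of_nonneg_left hCS hAq
  refine le_trans (le_of_eq ?_) (habs.trans hcombine)
  rw [norm_mul, norm_pow, Complex.norm_natCast]


lemma energy {ι : Type} [DecidableEq ι] (χ : AddChar K ℂ) (hχ : χ ≠ 1)
    (G : Finset ι) (v : ι → K) :
    (Fintype.card K : ℝ) * ∑ t : K, ((G.filter fun p => v p = t).card : ℝ) ^ 2
      = ∑ s : K, ‖∑ p ∈ G, χ (s * v p)‖ ^ 2 := by
  have hC : ((Fintype.card K : ℂ)) * ∑ p ∈ G, ∑ p' ∈ G, (if v p = v p' then (1:ℂ) else 0)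
      = ∑ s : K, (∑ p ∈ G, χ (s * v p)) * (starRingEnd ℂ) (∑ p ∈ G, χ (s * v p)) := by
    have e1 : ∀ s : K, (∑ p ∈ G, χ (s * v p)) * (starRingEnd ℂ) (∑ p ∈ G, χ (s * v p))
        = ∑ p ∈ G, ∑ p' ∈ G, χ (s * (v p - v p')) := by
      intro s
      rw [map_sum, Finset.sum_mul_sum]
      refine Finset.sum_congr rfl fun p _ => Finset.sum_congr rfl fun p' _ => ?_
      rw [← AddChar.map_neg_eq_conj, ← AddChar.map_add_eq_mul]
      congr 1; ring
    simp_rw [e1]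
    rw [Finset.sum_comm (s := (univ : Finset K)) (t := G)
      (f := fun s p => ∑ p' ∈ G, χ (s * (v p - v p')))]
    have com2 : ∀ p ∈ G, ∑ s : K, ∑ p' ∈ G, χ (s * (v p - v p'))
        = ∑ p' ∈ G, ∑ s : K, χ (s * (v p - v p')) := fun p _ =>
      Finset.sum_comm (s := (univ : Finset K)) (t := G)
        (f := fun s p' => χ (s * (v p - v p')))
    rw [Finset.sum_congr rfl com2, Finset.mul_sum]
    refine Finset.sum_congr rfl fun p _ => ?_
    rw [Finset.mul_sum]
    refine Finset.sum_congr rfl fun p' _ => ?_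
    rw [orth1 χ hχ (v p - v p')]
    simp [sub_eq_zero]
  have hsum2 : ∑ t : K, ((G.filter fun p => v p = t).card : ℝ) ^ 2
      = ∑ p ∈ G, ∑ p' ∈ G, (if v p = v p' then (1:ℝ) else 0) := by
    have hν : ∀ t : K, ((G.filter fun p => v p = t).card : ℝ)
        = ∑ p ∈ G, (if v p = t then (1:ℝ) else 0) := by
      intro t; rw [Finset.card_filter]; push_cast; rfl
    simp_rw [hν, sq, Finset.sum_mul_sum]
    rw [Finset.sum_comm (s := (univ : Finset K)) (t := G)
      (f := fun t p => ∑ p' ∈ G, (if v p = t then (1:ℝ) else 0) * (if v p' = t then (1:ℝ) else 0))]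
    have com2 : ∀ p ∈ G, ∑ t : K, ∑ p' ∈ G,
        (if v p = t then (1:ℝ) else 0) * (if v p' = t then (1:ℝ) else 0)
        = ∑ p' ∈ G, ∑ t : K,
        (if v p = t then (1:ℝ) else 0) * (if v p' = t then (1:ℝ) else 0) := fun p _ =>
      Finset.sum_comm (s := (univ : Finset K)) (t := G)
        (f := fun t p' => (if v p = t then (1:ℝ) else 0) * (if v p' = t then (1:ℝ) else 0))
    rw [Finset.sum_congr rfl com2]
    refine Finset.sum_congr rfl fun p _ => Finset.sum_congr rfl fun p' _ => ?_
    have hterm : ∀ t : K, (if v p = t then (1:ℝ) else 0) * (if v p' = t then (1:ℝ) else 0)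
        = if v p = t ∧ v p' = t then (1:ℝ) else 0 := by
      intro t; by_cases h1 : v p = t <;> by_cases h2 : v p' = t <;> simp [h1, h2]
    simp_rw [hterm]
    by_cases h : v p = v p'
    · rw [if_pos h, h]
      simp [Finset.sum_ite_eq]
    · rw [if_neg h]
      refine Finset.sum_eq_zero fun t _ => if_neg ?_
      rintro ⟨h1, h2⟩; exact h (h1.trans h2.symm)
  have hcast : ∀ s : K, ((‖∑ p ∈ G, χ (s * v p)‖ ^ 2 : ℝ) : ℂ)
      = (∑ p ∈ G, χ (s * v p)) * (starRingEnd ℂ) (∑ p ∈ G, χ (s * v p)) := by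
    intro s; rw [Complex.mul_conj, Complex.sq_norm]
  have final : (((Fintype.card K : ℝ) * ∑ t : K,
      ((G.filter fun p => v p = t).card : ℝ) ^ 2 : ℝ) : ℂ)
      = ((∑ s : K, ‖∑ p ∈ G, χ (s * v p)‖ ^ 2 : ℝ) : ℂ) := by
    rw [hsum2, Complex.ofReal_mul, Complex.ofReal_sum]
    have : ∀ p ∈ G, ((∑ p' ∈ G, (if v p = v p' then (1:ℝ) else 0) : ℝ) : ℂ)
        = ∑ p' ∈ G, (if v p = v p' then (1:ℂ) else 0) := by
      intro p _
      rw [Complex.ofReal_sum]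
      exact Finset.sum_congr rfl fun p' _ => by split <;> simp
    rw [Finset.sum_congr rfl this, Complex.ofReal_natCast, hC, Complex.ofReal_sum]
    exact Finset.sum_congr rfl fun s _ => (hcast s).symm
  exact_mod_cast final

end Stmt5Aux

open Stmt5Aux Finset

/-- Simple Falconer distance formula. If
`|∑_x χ(sP(x) + m·x)| ≤ A q^{d/2}` for all `m` and all `s ≠ 0`, then
`|E||F| ≥ C q^{d+1}` implies `|Δ_P(E,F)| ≥ c q`. -/
theorem stmt5 (d : ℕ) (hd : 1 ≤ d) (A : ℝ) (hA : 0 < A) :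
    ∃ C : ℝ, 0 < C ∧ ∃ c : ℝ, 0 < c ∧
      ∀ (K : Type) [Field K] [Fintype K] [DecidableEq K]
        (χ : AddChar K ℂ), χ ≠ 1 →
        ∀ P : MvPolynomial (Fin d) K,
          (∀ m : Fin d → K, ∀ s : K, s ≠ 0 →
            ‖(∑ x : Fin d → K,
                χ (s * MvPolynomial.eval x P + ∑ i, x i * m i))‖ ≤
              A * (Fintype.card K : ℝ) ^ ((d : ℝ) / 2)) →
          ∀ E F : Finset (Fin d → K),
            C * (Fintype.card K : ℝ) ^ (d + 1) ≤ (E.card : ℝ) * (F.card : ℝ) →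
            c * (Fintype.card K : ℝ) ≤
              (((E ×ˢ F).image
                (fun p => MvPolynomial.eval (p.1 - p.2) P)).card : ℝ) := by
  refine ⟨A ^ 2, by positivity, 1/2, by norm_num, ?_⟩
  intro K _ _ _ χ hχ P hP E F hEF
  classical
  set q : ℝ := (Fintype.card K : ℝ) with hqdef
  have hq2 : (2 : ℝ) ≤ q := by
    have := Fintype.one_lt_card (α := K)
    rw [hqdef]
    exact_mod_cast this
  have hq0 : (0 : ℝ) < q := by linarith
  set v : (Fin d → K) × (Fin d → K) → K := fun p => MvPolynomial.eval (p.1 - p.2) P with hv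
  set G : Finset ((Fin d → K) × (Fin d → K)) := E ×ˢ F with hG
  set Δ : Finset K := G.image v with hΔ
  set ν : K → ℕ := fun t => (G.filter fun p => v p = t).card with hν
  set N : ℝ := ∑ t : K, (ν t : ℝ) ^ 2 with hN
  set EF : ℝ := (E.card : ℝ) * (F.card : ℝ) with hEFdef
  have hEF0 : (0 : ℝ) ≤ EF := by positivity
  -- fiber decomposition
  have hfib : EF = ∑ t ∈ Δ, (ν t : ℝ) := by
    have h1 : G.card = ∑ t ∈ Δ, ν t :=
      Finset.card_eq_sum_card_fiberwise fun p hp => Finset.mem_image_of_mem v hp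
    have h2 : G.card = E.card * F.card := Finset.card_product E F
    rw [hEFdef, ← Nat.cast_mul, ← h2, h1]
    push_cast; rfl
  -- Cauchy-Schwarz
  have hCS : EF ^ 2 ≤ (Δ.card : ℝ) * N := by
    have h1 : (∑ t ∈ Δ, (ν t : ℝ)) ^ 2 ≤ (Δ.card : ℝ) * ∑ t ∈ Δ, (ν t : ℝ) ^ 2 :=
      sq_sum_le_card_mul_sum_sq
    have h2 : ∑ t ∈ Δ, (ν t : ℝ) ^ 2 ≤ N := by
      refine Finset.sum_le_sum_of_subset_of_nonneg (Finset.subset_univ Δ)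
        fun t _ _ => by positivity
    calc EF ^ 2 = (∑ t ∈ Δ, (ν t : ℝ)) ^ 2 := by rw [hfib]
      _ ≤ (Δ.card : ℝ) * ∑ t ∈ Δ, (ν t : ℝ) ^ 2 := h1
      _ ≤ (Δ.card : ℝ) * N := by
          exact mul_le_mul_of_nonneg_left h2 (by positivity)
  -- energy identity
  have henergy : q * N = ∑ s : K, ‖∑ p ∈ G, χ (s * v p)‖ ^ 2 :=
    energy χ hχ G v
  -- value at s = 0
  have hW0 : ‖∑ p ∈ G, χ ((0 : K) * v p)‖ ^ 2 = EF ^ 2 := by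
    have : ∀ p ∈ G, χ ((0 : K) * v p) = 1 := fun p _ => by
      rw [zero_mul, AddChar.map_zero_eq_one]
    rw [Finset.sum_congr rfl this, Finset.sum_const, nsmul_eq_mul, mul_one]
    rw [Complex.norm_natCast, hG, Finset.card_product]
    rw [hEFdef]; push_cast; ring
  -- bound for s ≠ 0
  have hhalf : (q ^ ((d : ℝ) / 2)) ^ 2 = q ^ d := by
    rw [← Real.rpow_natCast (q ^ ((d : ℝ) / 2)) 2, ← Real.rpow_mul hq0.le]
    rw [show ((d : ℝ) / 2) * (2 : ℕ) = (d : ℝ) by push_cast; ring, Real.rpow_natCast]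
  have hWs : ∀ s : K, s ≠ 0 → ‖∑ p ∈ G, χ (s * v p)‖ ^ 2
      ≤ A ^ 2 * q ^ d * EF := by
    intro s hs
    have hb := Wbound χ hχ P A hP E F s hs
    have hqd : (0 : ℝ) < q ^ d := by positivity
    have h1 : ‖∑ p ∈ G, χ (s * v p)‖
        ≤ A * q ^ ((d : ℝ) / 2) * Real.sqrt EF := by
      have h2 : q ^ d * ‖∑ p ∈ G, χ (s * v p)‖
          ≤ q ^ d * (A * q ^ ((d : ℝ) / 2) * Real.sqrt EF) := by
        calc q ^ d * ‖∑ p ∈ G, χ (s * v p)‖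
            ≤ A * q ^ ((d : ℝ) / 2) * (q ^ d * Real.sqrt EF) := hb
          _ = q ^ d * (A * q ^ ((d : ℝ) / 2) * Real.sqrt EF) := by ring
      exact le_of_mul_le_mul_left h2 hqd
    calc ‖∑ p ∈ G, χ (s * v p)‖ ^ 2
        ≤ (A * q ^ ((d : ℝ) / 2) * Real.sqrt EF) ^ 2 := by
          refine pow_le_pow_left₀ (norm_nonneg _) h1 2
      _ = A ^ 2 * (q ^ ((d : ℝ) / 2)) ^ 2 * (Real.sqrt EF) ^ 2 := by ring
      _ = A ^ 2 * q ^ d * EF := by rw [hhalf, Real.sq_sqrt hEF0]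
  -- sum over s
  have hsplit : q * N ≤ EF ^ 2 + q * (A ^ 2 * q ^ d * EF) := by
    rw [henergy, ← Finset.add_sum_erase (univ : Finset K)
      (fun s => ‖∑ p ∈ G, χ (s * v p)‖ ^ 2) (Finset.mem_univ 0)]
    have h1 : ∑ s ∈ (univ : Finset K).erase 0, ‖∑ p ∈ G, χ (s * v p)‖ ^ 2
        ≤ ∑ s ∈ (univ : Finset K).erase 0, A ^ 2 * q ^ d * EF :=
      Finset.sum_le_sum fun s hs => hWs s (Finset.ne_of_mem_erase hs)
    have h2 : ∑ s ∈ (univ : Finset K).erase 0, (A ^ 2 * q ^ d * EF : ℝ)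
        ≤ q * (A ^ 2 * q ^ d * EF) := by
      rw [Finset.sum_const, nsmul_eq_mul]
      refine mul_le_mul_of_nonneg_right ?_ (by positivity)
      have : ((univ : Finset K).erase 0).card ≤ Fintype.card K :=
        (Finset.card_erase_le).trans (le_of_eq (Finset.card_univ))
      rw [hqdef]
      exact_mod_cast this
    rw [hW0]
    linarith [h1.trans h2]
  -- use the size hypothesis
  have hsize : A ^ 2 * q ^ (d + 1) ≤ EF := hEF
  have hEFpos : (0 : ℝ) < EF := lt_of_lt_of_le (by positivity) hsize
  have hqd1 : q * (A ^ 2 * q ^ d * EF) = (A ^ 2 * q ^ (d + 1)) * EF := by ring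
  have hfinal : q * N ≤ 2 * EF ^ 2 := by
    have h3 : q * (A ^ 2 * q ^ d * EF) ≤ EF * EF := by
      rw [hqd1]
      exact mul_le_mul_of_nonneg_right hsize hEF0
    have h4 : EF * EF = EF ^ 2 := (sq EF).symm
    linarith [hsplit]
  have hNpos : (0 : ℝ) < N := by
    by_contra h
    push_neg at h
    have h5 : (Δ.card : ℝ) * N ≤ 0 :=
      mul_nonpos_of_nonneg_of_nonpos (Nat.cast_nonneg _) h
    have h6 : (0 : ℝ) < EF ^ 2 := by positivity
    linarith [hCS]
  have hq2Δ : q ≤ 2 * (Δ.card : ℝ) := by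
    have h1 : q * N ≤ 2 * ((Δ.card : ℝ) * N) := by linarith [hfinal, hCS]
    have h2 : q * N ≤ (2 * (Δ.card : ℝ)) * N := by rw [mul_assoc]; exact h1
    exact le_of_mul_le_mul_right h2 hNpos
  calc (1 / 2 : ℝ) * q ≤ (Δ.card : ℝ) := by linarith
    _ = _ := by rw [hΔ, hG, hv]
end

section
/- Fix an integer d ≥ 1 and a constant A > 0. There exist constants C > 0 and c > 0 depending only on d and A with the following property. Let F_q be a finite field with q elements, χ : F_q → ℂ a nontrivial additive character, and P ∈ F_q[x_1,…,x_d] a polynomial of degree ≥ 2 such that for every m ∈ F_q^d and every s ∈ F_q \ {0}, |∑_{x ∈ F_q^d} χ( s·P(x) + m·x )| ≤ A q^{d/2}. Define H ∈ F_q[x_1,…,x_d,x_{d+1}] by H(x, x_{d+1}) = P(x) − x_{d+1}. Then for all product sets E* = E × E_{d+1} and F* = F × F_{d+1} in F_q^d × F_q (with E, F ⊆ F_q^d and E_{d+1}, F_{d+1} ⊆ F_q nonempty) satisfying |E*|·|F*| / |F_{d+1}| ≥ C q^{d+1}, the distance set satisfies |Δ_H(E*, F*)| ≥ c q. -/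
open Finset Complex MvPolynomial

lemma norm_sq_to_conj (z : ℂ) : ((‖z‖ ^ 2 : ℝ) : ℂ) = z * (starRingEnd ℂ) z := by
  rw [Complex.mul_conj]; norm_cast
  rw [Complex.sq_norm]

lemma parseval_abstract {ι G : Type} [Fintype ι] [AddCommGroup G] [DecidableEq G]
    (c : ι → G → ℂ) (M : ℝ)
    (hmul : ∀ s e e', c s e * (starRingEnd ℂ) (c s e') = c s (e - e'))
    (hsum : ∀ a, ∑ s : ι, c s a = if a = 0 then (M : ℂ) else 0)
    (T : Finset G) : ∑ s : ι, ‖∑ e ∈ T, c s e‖ ^ 2 = M * T.card := by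
  have key : ∑ s : ι, ((∑ e ∈ T, c s e) * (starRingEnd ℂ) (∑ e ∈ T, c s e))
      = ((M : ℂ) * T.card) := by
    have h1 : ∀ s : ι, ((∑ e ∈ T, c s e) * (starRingEnd ℂ) (∑ e ∈ T, c s e))
        = ∑ e ∈ T, ∑ e' ∈ T, c s (e - e') := by
      intro s
      rw [map_sum, Finset.sum_mul_sum]
      exact Finset.sum_congr rfl fun e _ => Finset.sum_congr rfl fun e' _ => hmul s e e'
    simp_rw [h1]
    rw [Finset.sum_comm]
    have h2 : ∀ e ∈ T, ∑ e' ∈ T, ∑ s : ι, c s (e - e') = (M : ℂ) := by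
      intro e he
      rw [Finset.sum_congr rfl (fun e' _ => hsum (e - e'))]
      simp_rw [sub_eq_zero]
      simp [Finset.sum_ite_eq, he]
    calc ∑ e ∈ T, ∑ s : ι, ∑ e' ∈ T, c s (e - e')
        = ∑ e ∈ T, ∑ e' ∈ T, ∑ s : ι, c s (e - e') :=
          Finset.sum_congr rfl fun e _ => Finset.sum_comm
      _ = ∑ _e ∈ T, (M : ℂ) := Finset.sum_congr rfl h2
      _ = (M : ℂ) * T.card := by rw [Finset.sum_const]; ring
  rw [← Finset.sum_congr rfl (fun s _ => (norm_sq_to_conj (∑ e ∈ T, c s e)))] at key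
  exact_mod_cast key

variable {K : Type} [Field K] [Fintype K] [DecidableEq K]

lemma ortho1 (χ : AddChar K ℂ) (hχ : χ ≠ 1) (a : K) :
    ∑ s : K, χ (s * a) = if a = 0 then (Fintype.card K : ℂ) else 0 := by
  rw [AddChar.sum_mulShift a (AddChar.IsPrimitive.of_ne_one hχ)]; split <;> simp

/-- dot product as AddMonoidHom -/
def dotHom (d : ℕ) (a : Fin d → K) : (Fin d → K) →+ K where
  toFun m := ∑ i, a i * m i
  map_zero' := by simp
  map_add' x y := by simp [mul_add, Finset.sum_add_distrib]

lemma ortho_vec (d : ℕ) (χ : AddChar K ℂ) (hχ : χ ≠ 1) (a : Fin d → K) :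
    ∑ m : Fin d → K, χ (∑ i, a i * m i) =
      if a = 0 then ((Fintype.card K : ℂ) ^ d) else 0 := by
  by_cases ha : a = 0
  · simp [ha, Fintype.card_pi]
  · rw [if_neg ha]
    have hne : χ.compAddMonoidHom (dotHom d a) ≠ 1 := by
      intro h
      obtain ⟨i, hi⟩ : ∃ i, a i ≠ 0 := by
        by_contra hc; push_neg at hc; exact ha (funext hc)
      have : AddChar.mulShift χ (a i) = 1 := by
        ext t
        have := DFunLike.congr_fun h (Pi.single i t)
        simp only [AddChar.compAddMonoidHom, AddChar.coe_mk, AddChar.one_apply] at this ⊢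
        rw [AddChar.mulShift_apply]
        have hdot : (dotHom d a) (Pi.single i t) = a i * t := by
          simp [dotHom, Pi.single_apply, mul_ite, Finset.sum_ite_eq']
        rw [← hdot]
        exact this
      exact (AddChar.IsPrimitive.of_ne_one hχ) hi this
    have := AddChar.sum_eq_zero_of_ne_one hne
    simpa [AddChar.compAddMonoidHom, dotHom] using this

/-- Parseval for `U s = ∑ e ∈ T, χ (-(s*e))`. -/
lemma parseval_U (χ : AddChar K ℂ) (hχ : χ ≠ 1) (T : Finset K) :
    ∑ s : K, ‖∑ e ∈ T, χ (-(s * e))‖ ^ 2 = (Fintype.card K : ℝ) * T.card := by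
  refine parseval_abstract (fun s e => χ (-(s * e))) _ ?_ ?_ T
  · intro s e e'
    rw [← AddChar.map_neg_eq_conj, neg_neg, ← AddChar.map_add_eq_mul]
    ring_nf
  · intro a
    have := ortho1 χ hχ (-a)
    simp only [mul_neg, neg_mul] at this ⊢
    rw [this]
    simp

set_option maxHeartbeats 1000000 in
lemma parseval_SE (d : ℕ) (χ : AddChar K ℂ) (hχ : χ ≠ 1) (E : Finset (Fin d → K)) :
    ∑ m : Fin d → K, ‖∑ x ∈ E, χ (∑ i, x i * m i)‖ ^ 2
      = (Fintype.card K : ℝ) ^ d * E.card := by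
  have hmul : ∀ (m x x' : Fin d → K),
      χ (∑ i, x i * m i) * (starRingEnd ℂ) (χ (∑ i, x' i * m i))
        = χ (∑ i, (x - x') i * m i) := by
    intro m x x'
    rw [← AddChar.map_neg_eq_conj, ← AddChar.map_add_eq_mul]
    congr 1
    have h3 : ∀ i, (x - x') i * m i = x i * m i - x' i * m i := fun i => by
      simp [sub_mul]
    simp_rw [h3]
    rw [Finset.sum_sub_distrib]
    ring
  have hsum : ∀ a : Fin d → K, ∑ m : Fin d → K, χ (∑ i, a i * m i)
      = if a = 0 then (((Fintype.card K : ℝ) ^ d : ℝ) : ℂ) else 0 := by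
    intro a
    rw [ortho_vec d χ hχ a]; split <;> simp
  have h := parseval_abstract (ι := Fin d → K) (G := Fin d → K)
    (fun m x => χ (∑ i, x i * m i)) ((Fintype.card K : ℝ) ^ d) hmul hsum E
  exact h

set_option maxHeartbeats 1000000 in
lemma parseval_SF (d : ℕ) (χ : AddChar K ℂ) (hχ : χ ≠ 1) (F : Finset (Fin d → K)) :
    ∑ m : Fin d → K, ‖∑ y ∈ F, χ (-(∑ i, y i * m i))‖ ^ 2
      = (Fintype.card K : ℝ) ^ d * F.card := by
  have hmul : ∀ (m y y' : Fin d → K),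
      χ (-(∑ i, y i * m i)) * (starRingEnd ℂ) (χ (-(∑ i, y' i * m i)))
        = χ (-(∑ i, (y - y') i * m i)) := by
    intro m y y'
    rw [← AddChar.map_neg_eq_conj, neg_neg, ← AddChar.map_add_eq_mul]
    congr 1
    have h3 : ∀ i, (y - y') i * m i = y i * m i - y' i * m i := fun i => by
      simp [sub_mul]
    simp_rw [h3]
    rw [Finset.sum_sub_distrib]
    ring
  have hsum : ∀ a : Fin d → K, ∑ m : Fin d → K, χ (-(∑ i, a i * m i))
      = if a = 0 then (((Fintype.card K : ℝ) ^ d : ℝ) : ℂ) else 0 := by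
    intro a
    have h := ortho_vec d χ hχ (-a)
    have h2 : ∀ m : Fin d → K, (-(∑ i, a i * m i)) = ∑ i, (-a) i * m i := by
      intro m; simp [neg_mul]
    simp_rw [h2]
    rw [h]; simp
  have h := parseval_abstract (ι := Fin d → K) (G := Fin d → K)
    (fun m y => χ (-(∑ i, y i * m i))) ((Fintype.card K : ℝ) ^ d) hmul hsum F
  exact h


/-- Fourier identity for the incomplete character sum. -/
lemma fourier_id (d : ℕ) (χ : AddChar K ℂ) (hχ : χ ≠ 1) (P : MvPolynomial (Fin d) K)
    (E F : Finset (Fin d → K)) (s : K) :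
    ∑ m : Fin d → K,
        (∑ z : Fin d → K, χ (s * eval z P + ∑ i, z i * (-m) i)) *
          (∑ x ∈ E, χ (∑ i, x i * m i)) * (∑ y ∈ F, χ (-(∑ i, y i * m i)))
      = ((Fintype.card K : ℂ) ^ d) * ∑ x ∈ E, ∑ y ∈ F, χ (s * eval (x - y) P) := by
  have step1 : ∀ m : Fin d → K,
      (∑ z : Fin d → K, χ (s * eval z P + ∑ i, z i * (-m) i)) *
          (∑ x ∈ E, χ (∑ i, x i * m i)) * (∑ y ∈ F, χ (-(∑ i, y i * m i)))
        = ∑ z : Fin d → K, ∑ x ∈ E, ∑ y ∈ F,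
            χ (s * eval z P) * χ (∑ i, (x - y - z) i * m i) := by
    intro m
    rw [Finset.sum_mul_sum, Finset.sum_mul]
    refine Finset.sum_congr rfl fun z _ => ?_
    rw [Finset.sum_mul]
    refine Finset.sum_congr rfl fun x _ => ?_
    rw [Finset.mul_sum]
    refine Finset.sum_congr rfl fun y _ => ?_
    rw [← AddChar.map_add_eq_mul, ← AddChar.map_add_eq_mul, ← AddChar.map_add_eq_mul]
    congr 1
    have h1 : ∑ i, z i * (-m) i = -∑ i, z i * m i := by
      simp [mul_neg]
    have h2 : ∑ i, (x - y - z) i * m i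
        = ∑ i, x i * m i - ∑ i, y i * m i - ∑ i, z i * m i := by
      simp [sub_mul, Finset.sum_sub_distrib]
    rw [h1, h2]; ring
  rw [Finset.sum_congr rfl fun m _ => step1 m]
  rw [Finset.sum_comm]
  have step2 : ∀ z : Fin d → K,
      ∑ m : Fin d → K, ∑ x ∈ E, ∑ y ∈ F,
          χ (s * eval z P) * χ (∑ i, (x - y - z) i * m i)
        = ∑ x ∈ E, ∑ y ∈ F,
            χ (s * eval z P) * (if x - y - z = 0 then ((Fintype.card K : ℂ) ^ d) else 0) := by
    intro z
    rw [Finset.sum_comm]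
    refine Finset.sum_congr rfl fun x _ => ?_
    rw [Finset.sum_comm]
    refine Finset.sum_congr rfl fun y _ => ?_
    rw [← Finset.mul_sum, ortho_vec d χ hχ (x - y - z)]
  rw [Finset.sum_congr rfl fun z _ => step2 z]
  rw [Finset.sum_comm]
  rw [Finset.mul_sum]
  refine Finset.sum_congr rfl fun x _ => ?_
  rw [Finset.sum_comm, Finset.mul_sum]
  refine Finset.sum_congr rfl fun y _ => ?_
  have hc : ∀ z : Fin d → K, (x - y - z = 0) ↔ (z = x - y) := by
    intro z; constructor
    · intro h; have := sub_eq_zero.mp h; exact this.symm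
    · intro h; rw [h]; simp
  simp_rw [hc]
  simp [mul_ite, Finset.sum_ite_eq' Finset.univ]
  ring

lemma Tbound (d : ℕ) (A : ℝ) (hA : 0 ≤ A) (χ : AddChar K ℂ) (hχ : χ ≠ 1)
    (P : MvPolynomial (Fin d) K)
    (hexp : ∀ m : Fin d → K, ∀ s : K, s ≠ 0 →
      ‖∑ x : Fin d → K, χ (s * eval x P + ∑ i, x i * m i)‖ ≤
        A * (Fintype.card K : ℝ) ^ ((d : ℝ) / 2))
    (E F : Finset (Fin d → K)) (s : K) (hs : s ≠ 0) :
    ‖∑ x ∈ E, ∑ y ∈ F, χ (s * eval (x - y) P)‖ ^ 2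
      ≤ A ^ 2 * (Fintype.card K : ℝ) ^ d * E.card * F.card := by
  set q : ℕ := Fintype.card K with hq
  have hq0 : (0 : ℝ) < q := by exact_mod_cast Fintype.card_pos
  set T : ℂ := ∑ x ∈ E, ∑ y ∈ F, χ (s * eval (x - y) P) with hT
  set R : ℝ := ∑ m : Fin d → K,
      ‖∑ x ∈ E, χ (∑ i, x i * m i)‖ * ‖∑ y ∈ F, χ (-(∑ i, y i * m i))‖ with hR
  have hR0 : 0 ≤ R := Finset.sum_nonneg fun m _ => by positivity
  -- norm of the identity
  have hid := fourier_id d χ hχ P E F s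
  have hnorm : (q : ℝ) ^ d * ‖T‖ ≤ A * (q : ℝ) ^ ((d : ℝ) / 2) * R := by
    have h1 : ‖((q : ℂ) ^ d) * T‖ = (q : ℝ) ^ d * ‖T‖ := by
      rw [norm_mul]; congr 1; rw [norm_pow]; norm_num
    rw [← h1, ← hid]
    refine le_trans (norm_sum_le _ _) ?_
    rw [hR, Finset.mul_sum]
    refine Finset.sum_le_sum fun m _ => ?_
    rw [norm_mul, norm_mul]
    have hG : ‖∑ z : Fin d → K, χ (s * eval z P + ∑ i, z i * (-m) i)‖
        ≤ A * (q : ℝ) ^ ((d : ℝ) / 2) := by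
      exact hexp (-m) s hs
    calc ‖∑ z : Fin d → K, χ (s * eval z P + ∑ i, z i * (-m) i)‖ *
          ‖∑ x ∈ E, χ (∑ i, x i * m i)‖ * ‖∑ y ∈ F, χ (-(∑ i, y i * m i))‖
        ≤ (A * (q : ℝ) ^ ((d : ℝ) / 2)) *
          ‖∑ x ∈ E, χ (∑ i, x i * m i)‖ * ‖∑ y ∈ F, χ (-(∑ i, y i * m i))‖ := by
          gcongr
      _ = A * (q : ℝ) ^ ((d : ℝ) / 2) *
          (‖∑ x ∈ E, χ (∑ i, x i * m i)‖ * ‖∑ y ∈ F, χ (-(∑ i, y i * m i))‖) := by ring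
  have hR2 : R ^ 2 ≤ ((q : ℝ) ^ d * E.card) * ((q : ℝ) ^ d * F.card) := by
    rw [← parseval_SE d χ hχ E, ← parseval_SF d χ hχ F]
    exact Finset.sum_mul_sq_le_sq_mul_sq _ _ _
  have hhalf : ((q : ℝ) ^ ((d : ℝ) / 2)) ^ 2 = (q : ℝ) ^ d := by
    rw [← Real.rpow_natCast ((q : ℝ) ^ ((d : ℝ) / 2)) 2, ← Real.rpow_mul (le_of_lt hq0),
      show ((d : ℝ) / 2 * (2 : ℕ)) = (d : ℝ) by push_cast; ring]
    exact Real.rpow_natCast _ d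
  have key : ((q : ℝ) ^ d) ^ 2 * ‖T‖ ^ 2
      ≤ ((q : ℝ) ^ d) ^ 2 * (A ^ 2 * (q : ℝ) ^ d * E.card * F.card) := by
    calc ((q : ℝ) ^ d) ^ 2 * ‖T‖ ^ 2 = ((q : ℝ) ^ d * ‖T‖) ^ 2 := by ring
      _ ≤ (A * (q : ℝ) ^ ((d : ℝ) / 2) * R) ^ 2 := by
          apply pow_le_pow_left₀ (by positivity) hnorm
      _ = A ^ 2 * ((q : ℝ) ^ ((d : ℝ) / 2)) ^ 2 * R ^ 2 := by ring
      _ ≤ A ^ 2 * (q : ℝ) ^ d * (((q : ℝ) ^ d * E.card) * ((q : ℝ) ^ d * F.card)) := by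
          rw [hhalf]
          exact mul_le_mul_of_nonneg_left hR2 (by positivity)
      _ = ((q : ℝ) ^ d) ^ 2 * (A ^ 2 * (q : ℝ) ^ d * E.card * F.card) := by ring
  exact le_of_mul_le_mul_left key (by positivity)


lemma factor_psi (d : ℕ) (χ : AddChar K ℂ) (P : MvPolynomial (Fin d) K)
    (E F : Finset (Fin d → K)) (Ed Fd : Finset K) (s : K) :
    ∑ p ∈ (E ×ˢ Ed) ×ˢ (F ×ˢ Fd),
        χ (s * (eval (p.1.1 - p.2.1) P - (p.1.2 - p.2.2)))
      = (∑ x ∈ E, ∑ y ∈ F, χ (s * eval (x - y) P)) *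
        (∑ e ∈ Ed, χ (-(s * e))) * (∑ f ∈ Fd, χ (s * f)) := by
  rw [Finset.sum_product]
  simp only [Finset.sum_product]
  have hterm : ∀ (x : Fin d → K) (e : K) (y : Fin d → K) (f : K),
      χ (s * (eval (x - y) P - (e - f)))
        = χ (s * eval (x - y) P) * χ (-(s * e)) * χ (s * f) := by
    intro x e y f
    rw [← AddChar.map_add_eq_mul, ← AddChar.map_add_eq_mul]
    congr 1
    ring
  simp_rw [hterm]
  -- LHS : ∑ x ∈ E, ∑ e ∈ Ed, ∑ y ∈ F, ∑ f ∈ Fd, T x y * U e * V f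
  conv_rhs => rw [Finset.sum_mul_sum, Finset.sum_mul]
  refine Finset.sum_congr rfl fun x _ => ?_
  conv_rhs => rw [Finset.sum_mul]
  refine Finset.sum_congr rfl fun e _ => ?_
  conv_rhs => rw [Finset.sum_mul, Finset.sum_mul_sum]

lemma energy_id {α : Type} [DecidableEq α] (χ : AddChar K ℂ) (hχ : χ ≠ 1)
    (S : Finset α) (v : α → K) :
    ∑ s : K, ‖∑ p ∈ S, χ (s * v p)‖ ^ 2
      = (Fintype.card K : ℝ) *
          ∑ t : K, (((S.filter (fun p => v p = t)).card : ℝ)) ^ 2 := by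
  have key : ∑ s : K, ((∑ p ∈ S, χ (s * v p)) * (starRingEnd ℂ) (∑ p ∈ S, χ (s * v p)))
      = (Fintype.card K : ℂ) *
          ∑ t : K, (((S.filter (fun p => v p = t)).card : ℂ)) ^ 2 := by
    have h1 : ∀ s : K, ((∑ p ∈ S, χ (s * v p)) * (starRingEnd ℂ) (∑ p ∈ S, χ (s * v p)))
        = ∑ p ∈ S, ∑ p' ∈ S, χ (s * (v p - v p')) := by
      intro s
      rw [map_sum, Finset.sum_mul_sum]
      refine Finset.sum_congr rfl fun p _ => Finset.sum_congr rfl fun p' _ => ?_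
      rw [← AddChar.map_neg_eq_conj, ← AddChar.map_add_eq_mul]
      ring_nf
    simp_rw [h1]
    rw [Finset.sum_comm]
    have h2 : ∀ p ∈ S, ∑ s : K, ∑ p' ∈ S, χ (s * (v p - v p'))
        = (Fintype.card K : ℂ) * ((S.filter (fun p' => v p' = v p)).card : ℂ) := by
      intro p _
      rw [Finset.sum_comm]
      have h3 : ∀ p' ∈ S, ∑ s : K, χ (s * (v p - v p'))
          = if v p' = v p then (Fintype.card K : ℂ) else 0 := by
        intro p' _
        rw [ortho1 χ hχ]
        congr 1
        rw [sub_eq_zero]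
        exact propext ⟨fun h => h.symm, fun h => h.symm⟩
      rw [Finset.sum_congr rfl h3, ← Finset.sum_filter, Finset.sum_const, nsmul_eq_mul,
        mul_comm]
    rw [Finset.sum_congr rfl h2, ← Finset.mul_sum]
    congr 1
    -- ∑ p ∈ S, (ν (v p) : ℂ) = ∑ t, (ν t)^2
    rw [← Finset.sum_fiberwise_of_maps_to (g := v) (t := Finset.univ)
      (fun p _ => Finset.mem_univ (v p))
      (f := fun p => ((S.filter (fun p' => v p' = v p)).card : ℂ))]
    refine Finset.sum_congr rfl fun t _ => ?_
    have h4 : ∀ p ∈ S.filter (fun p => v p = t),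
        ((S.filter (fun p' => v p' = v p)).card : ℂ)
          = ((S.filter (fun p' => v p' = t)).card : ℂ) := by
      intro p hp
      rw [(Finset.mem_filter.mp hp).2]
    rw [Finset.sum_congr rfl h4, Finset.sum_const, nsmul_eq_mul, sq]
  rw [← Finset.sum_congr rfl (fun s _ => (norm_sq_to_conj (∑ p ∈ S, χ (s * v p))))] at key
  exact_mod_cast key


set_option maxHeartbeats 2000000 in
/-- Generalized paraboloid distances. Suppose `deg P ≥ 2` and
`|∑_x χ(sP(x) + m·x)| ≤ A q^{d/2}` for all `m` and all `s ≠ 0`. Set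
`H(x, x_{d+1}) = P(x) - x_{d+1}`. For product sets `E* = E × E_{d+1}` and
`F* = F × F_{d+1}` in `K^d × K` with `|E*||F*|/|F_{d+1}| ≥ C q^{d+1}`, the
distance set satisfies `|Δ_H(E*,F*)| ≥ c q`. -/
theorem stmt7 (d : ℕ) (hd : 1 ≤ d) (A : ℝ) (hA : 0 < A) :
    ∃ C : ℝ, 0 < C ∧ ∃ c : ℝ, 0 < c ∧
      ∀ (K : Type) [Field K] [Fintype K] [DecidableEq K]
        (χ : AddChar K ℂ), χ ≠ 1 →
        ∀ P : MvPolynomial (Fin d) K, 2 ≤ P.totalDegree →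
          (∀ m : Fin d → K, ∀ s : K, s ≠ 0 →
            ‖(∑ x : Fin d → K,
                χ (s * MvPolynomial.eval x P + ∑ i, x i * m i))‖ ≤
              A * (Fintype.card K : ℝ) ^ ((d : ℝ) / 2)) →
          ∀ (E F : Finset (Fin d → K)) (Ed Fd : Finset K),
            Ed.Nonempty → Fd.Nonempty →
            C * (Fintype.card K : ℝ) ^ (d + 1) ≤
              (((E ×ˢ Ed).card : ℝ) * ((F ×ˢ Fd).card : ℝ)) / (Fd.card : ℝ) →
            c * (Fintype.card K : ℝ) ≤
              ((((E ×ˢ Ed) ×ˢ (F ×ˢ Fd)).image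
                (fun p =>
                  MvPolynomial.eval (p.1.1 - p.2.1) P - (p.1.2 - p.2.2))).card : ℝ) := by
  refine ⟨A ^ 2, by positivity, 1 / 2, by norm_num, ?_⟩
  intro K _ _ _ χ hχ P _hdeg hexp E F Ed Fd _hEd hFd hcond
  have hq0 : (0 : ℝ) < (Fintype.card K : ℝ) := by exact_mod_cast Fintype.card_pos
  set S : Finset (((Fin d → K) × K) × ((Fin d → K) × K)) := (E ×ˢ Ed) ×ˢ (F ×ˢ Fd)
    with hS
  set v : (((Fin d → K) × K) × ((Fin d → K) × K)) → K :=
    fun p => MvPolynomial.eval (p.1.1 - p.2.1) P - (p.1.2 - p.2.2) with hv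
  have hFd0 : (0 : ℝ) < (Fd.card : ℝ) := by exact_mod_cast Finset.card_pos.mpr hFd
  -- the counting condition
  have hval : (((E ×ˢ Ed).card : ℝ) * ((F ×ˢ Fd).card : ℝ)) / (Fd.card : ℝ)
      = (E.card : ℝ) * Ed.card * F.card := by
    rw [Finset.card_product, Finset.card_product]
    push_cast
    field_simp
  rw [hval] at hcond
  have hcard : (S.card : ℝ) = (E.card : ℝ) * Ed.card * F.card * Fd.card := by
    rw [hS, Finset.card_product, Finset.card_product, Finset.card_product]
    push_cast
    ring
  have hN0 : (0 : ℝ) < (S.card : ℝ) := by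
    rw [hcard]
    have h1 : (0 : ℝ) < A ^ 2 * (Fintype.card K : ℝ) ^ (d + 1) := by positivity
    have h2 : (0 : ℝ) < (E.card : ℝ) * Ed.card * F.card := lt_of_lt_of_le h1 hcond
    positivity
  -- Cauchy-Schwarz
  set ν : K → ℕ := fun t => (S.filter (fun p => v p = t)).card with hν
  have hfib : (S.card : ℝ) = ∑ t ∈ S.image v, (ν t : ℝ) := by
    rw [Finset.card_eq_sum_card_fiberwise (f := v) (t := S.image v)
      (fun p hp => Finset.mem_image_of_mem v hp)]
    push_cast
    rfl
  have hCS : (S.card : ℝ) ^ 2 ≤ ((S.image v).card : ℝ) * ∑ t : K, (ν t : ℝ) ^ 2 := by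
    calc (S.card : ℝ) ^ 2 = (∑ t ∈ S.image v, (ν t : ℝ)) ^ 2 := by rw [hfib]
      _ ≤ ((S.image v).card : ℝ) * ∑ t ∈ S.image v, (ν t : ℝ) ^ 2 :=
          sq_sum_le_card_mul_sum_sq
      _ ≤ ((S.image v).card : ℝ) * ∑ t : K, (ν t : ℝ) ^ 2 := by
          refine mul_le_mul_of_nonneg_left ?_ (by positivity)
          refine Finset.sum_le_sum_of_subset_of_nonneg (Finset.subset_univ _) ?_
          intro t _ _; positivity
  -- energy identity
  have hEn : (Fintype.card K : ℝ) * ∑ t : K, (ν t : ℝ) ^ 2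
      = ∑ s : K, ‖∑ p ∈ S, χ (s * v p)‖ ^ 2 := by
    rw [energy_id χ hχ S v]
  -- factorization
  have hfact : ∀ s : K, ∑ p ∈ S, χ (s * v p)
      = (∑ x ∈ E, ∑ y ∈ F, χ (s * MvPolynomial.eval (x - y) P)) *
        (∑ e ∈ Ed, χ (-(s * e))) * (∑ f ∈ Fd, χ (s * f)) := by
    intro s
    exact factor_psi d χ P E F Ed Fd s
  -- value at 0
  have hpsi0 : ‖∑ p ∈ S, χ ((0 : K) * v p)‖ ^ 2 = (S.card : ℝ) ^ 2 := by
    have : ∑ p ∈ S, χ ((0 : K) * v p) = (S.card : ℂ) := by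
      rw [Finset.sum_congr rfl fun p _ => by rw [zero_mul, AddChar.map_zero_eq_one]]
      simp
    rw [this]
    simp [Complex.norm_natCast]
  -- the tail bound
  set B : ℝ := A ^ 2 * (Fintype.card K : ℝ) ^ d * E.card * F.card * (Fd.card : ℝ) ^ 2
    with hB
  have htail : ∑ s ∈ Finset.univ.erase (0 : K), ‖∑ p ∈ S, χ (s * v p)‖ ^ 2
      ≤ B * ((Fintype.card K : ℝ) * Ed.card) := by
    have hpt : ∀ s ∈ Finset.univ.erase (0 : K),
        ‖∑ p ∈ S, χ (s * v p)‖ ^ 2 ≤ B * ‖∑ e ∈ Ed, χ (-(s * e))‖ ^ 2 := by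
      intro s hs
      have hs0 : s ≠ 0 := (Finset.mem_erase.mp hs).1
      rw [hfact s, norm_mul, norm_mul, mul_pow, mul_pow]
      have hT2 := Tbound d A hA.le χ hχ P hexp E F s hs0
      have hV : ‖∑ f ∈ Fd, χ (s * f)‖ ≤ (Fd.card : ℝ) := by
        refine le_trans (norm_sum_le _ _) ?_
        simp
      have hV2 : ‖∑ f ∈ Fd, χ (s * f)‖ ^ 2 ≤ (Fd.card : ℝ) ^ 2 :=
        pow_le_pow_left₀ (norm_nonneg _) hV 2
      calc ‖∑ x ∈ E, ∑ y ∈ F, χ (s * MvPolynomial.eval (x - y) P)‖ ^ 2 *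
            ‖∑ e ∈ Ed, χ (-(s * e))‖ ^ 2 * ‖∑ f ∈ Fd, χ (s * f)‖ ^ 2
          = (‖∑ x ∈ E, ∑ y ∈ F, χ (s * MvPolynomial.eval (x - y) P)‖ ^ 2 *
             ‖∑ f ∈ Fd, χ (s * f)‖ ^ 2) * ‖∑ e ∈ Ed, χ (-(s * e))‖ ^ 2 := by ring
        _ ≤ ((A ^ 2 * (Fintype.card K : ℝ) ^ d * E.card * F.card) * (Fd.card : ℝ) ^ 2) *
              ‖∑ e ∈ Ed, χ (-(s * e))‖ ^ 2 := by
            refine mul_le_mul_of_nonneg_right ?_ (by positivity)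
            exact mul_le_mul hT2 hV2 (by positivity) (by positivity)
        _ = B * ‖∑ e ∈ Ed, χ (-(s * e))‖ ^ 2 := by rw [hB]
      done
    calc ∑ s ∈ Finset.univ.erase (0 : K), ‖∑ p ∈ S, χ (s * v p)‖ ^ 2
        ≤ ∑ s ∈ Finset.univ.erase (0 : K), B * ‖∑ e ∈ Ed, χ (-(s * e))‖ ^ 2 :=
          Finset.sum_le_sum hpt
      _ ≤ ∑ s : K, B * ‖∑ e ∈ Ed, χ (-(s * e))‖ ^ 2 := by
          refine Finset.sum_le_sum_of_subset_of_nonneg (Finset.erase_subset _ _) ?_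
          intro s _ _; positivity
      _ = B * ((Fintype.card K : ℝ) * Ed.card) := by
          rw [← Finset.mul_sum, parseval_U χ hχ Ed]
  -- splitting the sum over s
  have hsplit : ∑ s : K, ‖∑ p ∈ S, χ (s * v p)‖ ^ 2
      = ‖∑ p ∈ S, χ ((0 : K) * v p)‖ ^ 2 +
        ∑ s ∈ Finset.univ.erase (0 : K), ‖∑ p ∈ S, χ (s * v p)‖ ^ 2 :=
    (Finset.add_sum_erase _ _ (Finset.mem_univ 0)).symm
  -- bound the tail by N^2
  have htail2 : B * ((Fintype.card K : ℝ) * Ed.card) ≤ (S.card : ℝ) ^ 2 := by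
    have h1 : B * ((Fintype.card K : ℝ) * Ed.card)
        = (A ^ 2 * (Fintype.card K : ℝ) ^ (d + 1)) *
            ((E.card : ℝ) * F.card * Ed.card * (Fd.card : ℝ) ^ 2) := by
      rw [hB, pow_succ]
      ring
    have h2 : (A ^ 2 * (Fintype.card K : ℝ) ^ (d + 1)) *
          ((E.card : ℝ) * F.card * Ed.card * (Fd.card : ℝ) ^ 2)
        ≤ ((E.card : ℝ) * Ed.card * F.card) *
            ((E.card : ℝ) * F.card * Ed.card * (Fd.card : ℝ) ^ 2) :=
      mul_le_mul_of_nonneg_right hcond (by positivity)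
    have h3 : ((E.card : ℝ) * Ed.card * F.card) *
          ((E.card : ℝ) * F.card * Ed.card * (Fd.card : ℝ) ^ 2) = (S.card : ℝ) ^ 2 := by
      rw [hcard]; ring
    rw [h1]
    rw [← h3]
    exact h2
  -- put it together
  have hEn2 : (Fintype.card K : ℝ) * ∑ t : K, (ν t : ℝ) ^ 2 ≤ 2 * (S.card : ℝ) ^ 2 := by
    rw [hEn, hsplit, hpsi0]
    linarith [htail, htail2]
  have hfinal : (Fintype.card K : ℝ) * (S.card : ℝ) ^ 2
      ≤ ((S.image v).card : ℝ) * (2 * (S.card : ℝ) ^ 2) := by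
    calc (Fintype.card K : ℝ) * (S.card : ℝ) ^ 2
        ≤ (Fintype.card K : ℝ) * (((S.image v).card : ℝ) * ∑ t : K, (ν t : ℝ) ^ 2) :=
          mul_le_mul_of_nonneg_left hCS hq0.le
      _ = ((S.image v).card : ℝ) * ((Fintype.card K : ℝ) * ∑ t : K, (ν t : ℝ) ^ 2) := by
          ring
      _ ≤ ((S.image v).card : ℝ) * (2 * (S.card : ℝ) ^ 2) :=
          mul_le_mul_of_nonneg_left hEn2 (by positivity)
  have hq2 : (Fintype.card K : ℝ) ≤ 2 * ((S.image v).card : ℝ) := by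
    have hN2 : (0 : ℝ) < (S.card : ℝ) ^ 2 := by positivity
    have := hfinal
    nlinarith
  have himg : S.image v = ((E ×ˢ Ed) ×ˢ (F ×ˢ Fd)).image
      (fun p => MvPolynomial.eval (p.1.1 - p.2.1) P - (p.1.2 - p.2.2)) := rfl
  rw [← himg]
  linarith
end

section
/- Fix an odd integer d ≥ 3. There exists a constant C > 0 depending only on d such that for every finite field F_q of odd characteristic, every polynomial P(x) = ∑_{j=1}^d a_j x_j^2 ∈ F_q[x_1,…,x_d] with a_j ≠ 0 for all j, and every nontrivial additive character χ : F_q → ℂ, the varieties V_t = { x ∈ F_q^d : P(x) = t } satisfy |∑_{x ∈ V_t} χ(−x·m)| ≤ C q^{(d−1)/2} for all m ∈ F_q^d \ {0} and ALL t ∈ F_q (including t = 0). -/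
open Finset AddChar

namespace Stmt14Aux

variable {K : Type} [Field K] [Fintype K] [DecidableEq K]

noncomputable def eta (K : Type) [Field K] [Fintype K] [DecidableEq K] : MulChar K ℂ :=
  (quadraticChar K).ringHomComp (Int.castRingHom ℂ)

lemma eta_ne_one (hK : ringChar K ≠ 2) : eta K ≠ 1 :=
  (MulChar.ringHomComp_ne_one_iff (RingHom.injective_int _)).mpr (quadraticChar_ne_one hK)

lemma eta_quadratic : (eta K).IsQuadratic :=
  (quadraticChar_isQuadratic K).comp _

lemma eta_mul_self {s : K} (hs : s ≠ 0) : eta K s * eta K s = 1 := by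
  rw [← map_mul, ← sq]
  show ((quadraticChar K (s ^ 2) : ℤ) : ℂ) = 1
  rw [quadraticChar_sq_one' hs]; norm_num

lemma eta_abs_le (s : K) : ‖eta K s‖ ≤ 1 := by
  rcases eta_quadratic (K := K) s with h | h | h <;> simp [h]

lemma eta_abs_of_ne {s : K} (hs : s ≠ 0) : ‖eta K s‖ = 1 := by
  have h2 := eta_mul_self hs
  have : ‖eta K s‖ * ‖eta K s‖ = 1 := by
    rw [← norm_mul, h2, norm_one]
  nlinarith [norm_nonneg (eta K s), eta_abs_le (K := K) s]

/-- abs of the Gauss sum -/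
lemma abs_gaussSum (hK : ringChar K ≠ 2) {χ : AddChar K ℂ} (hχ : χ ≠ 1) :
    ‖gaussSum (eta K) χ‖ = Real.sqrt (Fintype.card K) := by
  have hsq := gaussSum_sq (eta_ne_one hK) eta_quadratic (AddChar.IsPrimitive.of_ne_one hχ)
  have habs : ‖gaussSum (eta K) χ‖ ^ 2 = (Fintype.card K : ℝ) := by
    rw [← norm_pow, hsq, norm_mul, eta_abs_of_ne (by
      exact neg_ne_zero.mpr one_ne_zero), one_mul, Complex.norm_natCast]
  rw [← Real.sqrt_sq (norm_nonneg _), habs]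

end Stmt14Aux
namespace Stmt14Aux

variable {K : Type} [Field K] [Fintype K] [DecidableEq K]

/-- Pure square Gauss sum. -/
lemma sum_sq (hK : ringChar K ≠ 2) {χ : AddChar K ℂ} (hχ : χ ≠ 1) {c : K} (hc : c ≠ 0) :
    ∑ x : K, χ (c * x ^ 2) = eta K c * gaussSum (eta K) χ := by
  have hprim := AddChar.IsPrimitive.of_ne_one hχ
  have hcard : ∀ y : K, (#(univ.filter (fun x : K => x ^ 2 = y)) : ℂ) = eta K y + 1 := by
    intro y
    have h := quadraticChar_card_sqrts hK y
    rw [Set.toFinset_setOf] at h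
    have : (#(univ.filter (fun x : K => x ^ 2 = y)) : ℤ) = quadraticChar K y + 1 := h
    calc (#(univ.filter (fun x : K => x ^ 2 = y)) : ℂ)
        = ((#(univ.filter (fun x : K => x ^ 2 = y)) : ℤ) : ℂ) := by push_cast; ring
      _ = ((quadraticChar K y : ℤ) : ℂ) + 1 := by rw [this]; push_cast; ring
      _ = eta K y + 1 := rfl
  have step1 : ∑ x : K, χ (c * x ^ 2) = ∑ y : K, (eta K y + 1) * χ (c * y) := by
    rw [← Finset.sum_fiberwise' Finset.univ (fun x : K => x ^ 2) (fun y => χ (c * y))]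
    refine Finset.sum_congr rfl fun y _ => ?_
    rw [Finset.sum_const, nsmul_eq_mul, hcard y]
  rw [step1]
  have split : ∑ y : K, (eta K y + 1) * χ (c * y)
      = (∑ y : K, eta K y * χ (c * y)) + ∑ y : K, χ (y * c) := by
    rw [← Finset.sum_add_distrib]
    refine Finset.sum_congr rfl fun y _ => by rw [add_mul, one_mul, mul_comm c y]
  rw [split, AddChar.sum_mulShift c hprim, if_neg hc]
  push_cast
  rw [add_zero]
  -- now the twisted Gauss sum
  have hunit : IsUnit c := hc.isUnit
  have := gaussSum_mulShift (eta K) χ hunit.unit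
  have hms : gaussSum (eta K) (χ.mulShift hunit.unit) = ∑ y : K, eta K y * χ (c * y) := by
    refine Finset.sum_congr rfl fun y _ => ?_
    rw [AddChar.mulShift_apply, IsUnit.unit_spec]
  rw [hms] at this
  have hcc : eta K (hunit.unit : K) = eta K c := by rw [IsUnit.unit_spec]
  rw [hcc] at this
  calc ∑ y : K, eta K y * χ (c * y)
      = (eta K c * eta K c) * ∑ y : K, eta K y * χ (c * y) := by rw [eta_mul_self hc, one_mul]
    _ = eta K c * (eta K c * ∑ y : K, eta K y * χ (c * y)) := by ring
    _ = eta K c * gaussSum (eta K) χ := by rw [this]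

end Stmt14Aux
namespace Stmt14Aux

variable {K : Type} [Field K] [Fintype K] [DecidableEq K]

/-- General quadratic Gauss sum via completing the square. -/
lemma sum_quad (hK : ringChar K ≠ 2) {χ : AddChar K ℂ} (hχ : χ ≠ 1) {c : K} (hc : c ≠ 0) (e : K) :
    ∑ x : K, χ (c * x ^ 2 + e * x)
      = eta K c * gaussSum (eta K) χ * χ (-(e ^ 2 / (4 * c))) := by
  have h2 : (2 : K) ≠ 0 := Ring.two_ne_zero hK
  have h4 : (4 : K) ≠ 0 := by
    have : (4 : K) = 2 * 2 := by norm_num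
    rw [this]; exact mul_ne_zero h2 h2
  have key : ∀ y : K, c * (y - e / (2 * c)) ^ 2 + e * (y - e / (2 * c))
      = c * y ^ 2 + -(e ^ 2 / (4 * c)) := by
    intro y; field_simp; ring
  calc ∑ x : K, χ (c * x ^ 2 + e * x)
      = ∑ y : K, χ (c * (y - e / (2 * c)) ^ 2 + e * (y - e / (2 * c))) := by
        exact (Fintype.sum_equiv (Equiv.subRight (e / (2 * c))) _ _ fun y => rfl).symm
    _ = ∑ y : K, χ (c * y ^ 2) * χ (-(e ^ 2 / (4 * c))) := by
        refine Finset.sum_congr rfl fun y _ => ?_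
        rw [key y, AddChar.map_add_eq_mul]
    _ = (∑ y : K, χ (c * y ^ 2)) * χ (-(e ^ 2 / (4 * c))) := by rw [Finset.sum_mul]
    _ = eta K c * gaussSum (eta K) χ * χ (-(e ^ 2 / (4 * c))) := by rw [sum_sq hK hχ hc]

/-- Fourier uniqueness. -/
lemma fourier_ext {χ : AddChar K ℂ} (hχ : χ ≠ 1) (f g : K → ℂ)
    (h : ∀ w : K, ∑ α : K, f α * χ (-(α * w)) = ∑ α : K, g α * χ (-(α * w))) : f = g := by
  have hprim := AddChar.IsPrimitive.of_ne_one hχ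
  funext β
  have h0 : ∀ w : K, ∑ α : K, (f α - g α) * χ (-(α * w)) = 0 := by
    intro w
    simp only [sub_mul, Finset.sum_sub_distrib, h w, sub_self]
  have key : ∑ w : K, ∑ α : K, χ (β * w) * ((f α - g α) * χ (-(α * w))) = 0 := by
    calc ∑ w : K, ∑ α : K, χ (β * w) * ((f α - g α) * χ (-(α * w)))
        = ∑ w : K, χ (β * w) * ∑ α : K, (f α - g α) * χ (-(α * w)) := by
          refine Finset.sum_congr rfl fun w _ => ?_; rw [Finset.mul_sum]
      _ = 0 := by simp only [h0, mul_zero, Finset.sum_const_zero]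
  rw [Finset.sum_comm] at key
  have inner : ∀ α : K, ∑ w : K, χ (β * w) * ((f α - g α) * χ (-(α * w)))
      = (f α - g α) * (if β - α = 0 then (Fintype.card K : ℂ) else 0) := by
    intro α
    calc ∑ w : K, χ (β * w) * ((f α - g α) * χ (-(α * w)))
        = ∑ w : K, (f α - g α) * χ (w * (β - α)) := by
          refine Finset.sum_congr rfl fun w _ => ?_
          rw [mul_left_comm, ← AddChar.map_add_eq_mul]
          congr 2
          ring
      _ = (f α - g α) * ∑ w : K, χ (w * (β - α)) := by rw [Finset.mul_sum]
      _ = _ := by rw [AddChar.sum_mulShift _ hprim]; split <;> simp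
  simp only [inner] at key
  have step : ∑ α : K, (f α - g α) * (if β - α = 0 then (Fintype.card K : ℂ) else 0)
      = (f β - g β) * (Fintype.card K : ℂ) := by
    rw [Finset.sum_eq_single β]
    · simp
    · intro α _ hα
      rw [if_neg (by simpa [sub_eq_zero] using (Ne.symm hα)), mul_zero]
    · intro h; exact absurd (Finset.mem_univ β) h
  rw [step] at key
  have hq : (Fintype.card K : ℂ) ≠ 0 := Nat.cast_ne_zero.mpr Fintype.card_ne_zero
  rcases mul_eq_zero.mp key with h' | h'
  · exact sub_eq_zero.mp h'
  · exact absurd h' hq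

end Stmt14Aux
namespace Stmt14Aux

variable {K : Type} [Field K] [Fintype K] [DecidableEq K]

lemma abs_addChar (χ : AddChar K ℂ) (x : K) : ‖χ x‖ = 1 := by
  rw [AddChar.norm_apply]

lemma card_sqrts_le (hK : ringChar K ≠ 2) (y : K) :
    #(univ.filter (fun v : K => v ^ 2 = y)) ≤ 2 := by
  have h := quadraticChar_card_sqrts hK y
  rw [Set.toFinset_setOf] at h
  have h2 : quadraticChar K y ≤ 1 := by
    rcases quadraticChar_isQuadratic K y with h' | h' | h' <;> rw [h'] <;> norm_num
  omega

/-- The Salié sum bound (including degenerate cases). -/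
lemma salie (hK : ringChar K ≠ 2) {χ : AddChar K ℂ} (hχ : χ ≠ 1) (b α : K) :
    ‖∑ s : K, eta K s * χ (α * s + b * s⁻¹)‖
      ≤ 2 * Real.sqrt (Fintype.card K) := by
  have hprim := AddChar.IsPrimitive.of_ne_one hχ
  have hsqrt0 : (0:ℝ) ≤ Real.sqrt (Fintype.card K) := Real.sqrt_nonneg _
  rcases eq_or_ne b 0 with hb | hb
  · -- degenerate case b = 0
    have hsum : ∑ s : K, eta K s * χ (α * s + b * s⁻¹) = ∑ s : K, eta K s * χ (α * s) := by
      refine Finset.sum_congr rfl fun s _ => ?_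
      rw [hb, zero_mul, add_zero]
    rw [hsum]
    rcases eq_or_ne α 0 with hα | hα
    · have : ∑ s : K, eta K s * χ (α * s) = 0 := by
        simp only [hα, zero_mul, AddChar.map_zero_eq_one, mul_one]
        exact (eta K).sum_eq_zero_of_ne_one (eta_ne_one hK)
      rw [this, norm_zero]
      linarith
    · have hunit : IsUnit α := hα.isUnit
      have hG := gaussSum_mulShift (eta K) χ hunit.unit
      have hms : gaussSum (eta K) (χ.mulShift hunit.unit) = ∑ s : K, eta K s * χ (α * s) := by
        refine Finset.sum_congr rfl fun s _ => ?_
        rw [AddChar.mulShift_apply, IsUnit.unit_spec]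
      rw [hms, IsUnit.unit_spec] at hG
      have habs : ‖eta K α‖ * ‖∑ s : K, eta K s * χ (α * s)‖
          = Real.sqrt (Fintype.card K) := by
        rw [← norm_mul, hG, abs_gaussSum hK hχ]
      rw [eta_abs_of_ne hα, one_mul] at habs
      rw [habs]
      linarith
  · -- main case b ≠ 0
    set G := gaussSum (eta K) χ with hGdef
    set f : K → ℂ := fun α => ∑ s : K, eta K s * χ (α * s + b * s⁻¹) with hf
    set g : K → ℂ := fun α =>
      eta K b * G * ∑ v ∈ univ.filter (fun v : K => v ^ 2 = α * b), χ (2 * v) with hg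
    have hfg : f = g := by
      apply fourier_ext hχ
      intro w
      -- f side
      have hF : ∑ α : K, f α * χ (-(α * w)) = (Fintype.card K : ℂ) * (eta K w * χ (b * w⁻¹)) := by
        calc ∑ α : K, f α * χ (-(α * w))
            = ∑ α : K, ∑ s : K, eta K s * χ (b * s⁻¹) * χ (α * (s - w)) := by
              refine Finset.sum_congr rfl fun a _ => ?_
              rw [hf, Finset.sum_mul]
              refine Finset.sum_congr rfl fun s _ => ?_
              rw [mul_assoc, mul_assoc, ← AddChar.map_add_eq_mul, ← AddChar.map_add_eq_mul]
              congr 2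
              ring
          _ = ∑ s : K, eta K s * χ (b * s⁻¹) * ∑ α : K, χ (α * (s - w)) := by
              rw [Finset.sum_comm]
              exact Finset.sum_congr rfl fun s _ => by rw [Finset.mul_sum]
          _ = ∑ s : K, eta K s * χ (b * s⁻¹)
                * (if s - w = 0 then (Fintype.card K : ℂ) else 0) := by
              refine Finset.sum_congr rfl fun s _ => ?_
              rw [AddChar.sum_mulShift _ hprim]
              split <;> simp
          _ = (Fintype.card K : ℂ) * (eta K w * χ (b * w⁻¹)) := by
              rw [Finset.sum_eq_single w]
              · rw [if_pos (sub_self w)]; ring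
              · intro s _ hs
                rw [if_neg (sub_ne_zero.mpr hs), mul_zero]
              · intro h; exact absurd (Finset.mem_univ w) h
      -- g side
      have hswap : ∑ α : K, g α * χ (-(α * w))
          = eta K b * G * ∑ v : K, χ (2 * v) * χ (-(v ^ 2 * b⁻¹ * w)) := by
        calc ∑ α : K, g α * χ (-(α * w))
            = ∑ α : K, ∑ v : K, (if v ^ 2 = α * b then
                eta K b * G * (χ (2 * v) * χ (-(α * w))) else 0) := by
              refine Finset.sum_congr rfl fun a _ => ?_
              simp only [hg]
              rw [Finset.mul_sum, Finset.sum_mul, ← Finset.sum_filter]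
              exact Finset.sum_congr rfl fun v _ => by ring
          _ = ∑ v : K, ∑ α : K, (if α = v ^ 2 * b⁻¹ then
                eta K b * G * (χ (2 * v) * χ (-(α * w))) else 0) := by
              rw [Finset.sum_comm]
              refine Finset.sum_congr rfl fun v _ => Finset.sum_congr rfl fun a _ =>
                if_congr ?_ rfl rfl
              constructor <;> intro h
              · rw [h]; field_simp
              · rw [h]; field_simp
          _ = ∑ v : K, eta K b * G * (χ (2 * v) * χ (-(v ^ 2 * b⁻¹ * w))) := by
              refine Finset.sum_congr rfl fun v _ => ?_
              rw [Finset.sum_ite_eq' Finset.univ (v ^ 2 * b⁻¹)]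
              simp
          _ = eta K b * G * ∑ v : K, χ (2 * v) * χ (-(v ^ 2 * b⁻¹ * w)) := by
              rw [Finset.mul_sum]
      rw [hF, hswap]
      rcases eq_or_ne w 0 with hw | hw
      · -- w = 0
        have : ∑ v : K, χ (2 * v) * χ (-(v ^ 2 * b⁻¹ * w)) = ∑ v : K, χ (v * 2) := by
          refine Finset.sum_congr rfl fun v _ => by rw [hw]; ring_nf; rw [mul_comm]; simp
        rw [this, AddChar.sum_mulShift _ hprim, if_neg (Ring.two_ne_zero hK)]
        simp [hw, MulChar.map_zero]
      · -- w ≠ 0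
        have h2 : (2 : K) ≠ 0 := Ring.two_ne_zero hK
        have h4 : (4 : K) ≠ 0 := by
          have : (4 : K) = 2 * 2 := by norm_num
          rw [this]; exact mul_ne_zero h2 h2
        have hc' : -(b⁻¹ * w) ≠ 0 :=
          neg_ne_zero.mpr (mul_ne_zero (inv_ne_zero hb) hw)
        have step : ∑ v : K, χ (2 * v) * χ (-(v ^ 2 * b⁻¹ * w))
            = ∑ v : K, χ (-(b⁻¹ * w) * v ^ 2 + 2 * v) := by
          refine Finset.sum_congr rfl fun v _ => ?_
          rw [← AddChar.map_add_eq_mul]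
          congr 1
          ring
        rw [step, sum_quad hK hχ hc' 2]
        have harg : -((2:K) ^ 2 / (4 * -(b⁻¹ * w))) = b * w⁻¹ := by
          field_simp
          ring
        rw [harg, ← hGdef]
        have hG2 : G * G = eta K (-1) * (Fintype.card K : ℂ) := by
          have := gaussSum_sq (eta_ne_one hK) eta_quadratic hprim
          rwa [sq] at this
        have hbc : b * -(b⁻¹ * w) = -w := by field_simp
        symm
        calc eta K b * G * (eta K (-(b⁻¹ * w)) * G * χ (b * w⁻¹))
            = (eta K b * eta K (-(b⁻¹ * w))) * (G * G) * χ (b * w⁻¹) := by ring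
          _ = eta K (-w) * (eta K (-1) * (Fintype.card K : ℂ)) * χ (b * w⁻¹) := by
              rw [← map_mul, hbc, hG2]
          _ = (eta K (-w) * eta K (-1)) * (Fintype.card K : ℂ) * χ (b * w⁻¹) := by ring
          _ = (Fintype.card K : ℂ) * (eta K w * χ (b * w⁻¹)) := by
              rw [← map_mul]
              have hww : (-w) * (-1) = w := by ring
              rw [hww]
              ring
    -- now bound g
    have : ‖f α‖ ≤ 2 * Real.sqrt (Fintype.card K) := by
      rw [hfg]
      rw [hg]
      simp only
      rw [norm_mul, norm_mul]
      have h1 : ‖eta K b‖ = 1 := eta_abs_of_ne hb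
      have h2 : ‖G‖ = Real.sqrt (Fintype.card K) := abs_gaussSum hK hχ
      rw [h1, h2, one_mul]
      have h3 : ‖∑ v ∈ univ.filter (fun v : K => v ^ 2 = α * b), χ (2 * v)‖ ≤ 2 := by
        calc ‖∑ v ∈ univ.filter (fun v : K => v ^ 2 = α * b), χ (2 * v)‖
            ≤ ∑ v ∈ univ.filter (fun v : K => v ^ 2 = α * b), ‖χ (2 * v)‖ :=
              norm_sum_le _ _
          _ = #(univ.filter (fun v : K => v ^ 2 = α * b)) := by
              rw [Finset.sum_congr rfl fun v _ => abs_addChar χ (2 * v)]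
              simp
          _ ≤ 2 := by exact_mod_cast card_sqrts_le hK (α * b)
      calc Real.sqrt (Fintype.card K)
            * ‖∑ v ∈ univ.filter (fun v : K => v ^ 2 = α * b), χ (2 * v)‖
          ≤ Real.sqrt (Fintype.card K) * 2 := by
            exact mul_le_mul_of_nonneg_left h3 hsqrt0
        _ = 2 * Real.sqrt (Fintype.card K) := by ring
    exact this

end Stmt14Aux
namespace Stmt14Aux

variable {K : Type} [Field K] [Fintype K] [DecidableEq K]

lemma addChar_map_sum {ι : Type*} (χ : AddChar K ℂ) (s : Finset ι) (f : ι → K) :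
    χ (∑ i ∈ s, f i) = ∏ i ∈ s, χ (f i) := by
  classical
  induction s using Finset.induction_on with
  | empty => simp
  | insert _ _ h ih => rw [Finset.sum_insert h, Finset.prod_insert h, AddChar.map_add_eq_mul, ih]

lemma eta_pow_odd {d : ℕ} (hd0 : d ≠ 0) (hodd : Odd d) (s : K) :
    eta K s ^ d = eta K s := by
  rcases eq_or_ne s 0 with hs | hs
  · rw [hs, MulChar.map_zero, zero_pow hd0]
  · obtain ⟨k, hk⟩ := hodd
    rw [hk, pow_succ, pow_mul, sq, eta_mul_self hs, one_pow, one_mul]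

lemma key_identity (hK : ringChar K ≠ 2) {χ : AddChar K ℂ} (hχ : χ ≠ 1)
    {d : ℕ} (hd0 : d ≠ 0) (hodd : Odd d)
    (a : Fin d → K) (ha : ∀ j, a j ≠ 0) (m : Fin d → K) (hm : m ≠ 0) (t : K) :
    (Fintype.card K : ℂ) *
        ∑ x ∈ Finset.univ.filter (fun x : Fin d → K => ∑ j, a j * x j ^ 2 = t),
          χ (-(∑ i, x i * m i))
      = (∏ j, eta K (a j)) * (gaussSum (eta K) χ) ^ d *
          ∑ s : K, eta K s * χ (-t * s + (∑ j, -((m j) ^ 2 / (4 * a j))) * s⁻¹) := by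
  have hprim := AddChar.IsPrimitive.of_ne_one hχ
  have h2 : (2 : K) ≠ 0 := Ring.two_ne_zero hK
  have h4 : (4 : K) ≠ 0 := by
    have : (4 : K) = 2 * 2 := by norm_num
    rw [this]; exact mul_ne_zero h2 h2
  set B : K := ∑ j, -((m j) ^ 2 / (4 * a j)) with hB
  set G := gaussSum (eta K) χ with hGdef
  have hfub : ∀ F : Fin d → K → ℂ,
      (∏ j, ∑ u : K, F j u) = ∑ x : Fin d → K, ∏ j, F j (x j) := by
    intro F
    rw [Finset.prod_univ_sum, Fintype.piFinset_univ]
  have step1 : (Fintype.card K : ℂ) *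
      ∑ x ∈ Finset.univ.filter (fun x : Fin d → K => ∑ j, a j * x j ^ 2 = t),
        χ (-(∑ i, x i * m i))
      = ∑ x : Fin d → K,
          (∑ s : K, χ (s * ((∑ j, a j * x j ^ 2) - t))) * χ (-(∑ i, x i * m i)) := by
    rw [Finset.sum_filter, Finset.mul_sum]
    refine Finset.sum_congr rfl fun x _ => ?_
    rw [AddChar.sum_mulShift _ hprim]
    by_cases h : (∑ j, a j * x j ^ 2) = t
    · rw [if_pos h, if_pos (sub_eq_zero.mpr h)]
    · rw [if_neg h, if_neg (fun hc => h (sub_eq_zero.mp hc))]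
      simp
  have step2 : ∑ x : Fin d → K,
      (∑ s : K, χ (s * ((∑ j, a j * x j ^ 2) - t))) * χ (-(∑ i, x i * m i))
      = ∑ s : K, ∑ x : Fin d → K,
          χ (s * ((∑ j, a j * x j ^ 2) - t)) * χ (-(∑ i, x i * m i)) := by
    rw [Finset.sum_comm]
    exact Finset.sum_congr rfl fun x _ => by rw [Finset.sum_mul]
  have step3 : ∀ s : K, ∑ x : Fin d → K,
      χ (s * ((∑ j, a j * x j ^ 2) - t)) * χ (-(∑ i, x i * m i))
      = χ (-(t * s)) * ∏ j, ∑ u : K, χ (s * a j * u ^ 2 + -(m j) * u) := by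
    intro s
    have perx : ∀ x : Fin d → K,
        χ (s * ((∑ j, a j * x j ^ 2) - t)) * χ (-(∑ i, x i * m i))
        = χ (-(t * s)) * ∏ j, χ (s * a j * x j ^ 2 + -(m j) * x j) := by
      intro x
      have e1 : ∑ j, (s * a j * x j ^ 2 + -(m j) * x j)
          = s * (∑ j, a j * x j ^ 2) + -(∑ i, x i * m i) := by
        rw [Finset.sum_add_distrib, Finset.mul_sum, ← Finset.sum_neg_distrib]
        congr 1
        · exact Finset.sum_congr rfl fun j _ => by ring
        · exact Finset.sum_congr rfl fun j _ => by ring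
      have harg : s * ((∑ j, a j * x j ^ 2) - t) + -(∑ i, x i * m i)
          = (∑ j, (s * a j * x j ^ 2 + -(m j) * x j)) + -(t * s) := by
        rw [e1]; ring
      rw [← AddChar.map_add_eq_mul, harg, AddChar.map_add_eq_mul,
        addChar_map_sum, mul_comm]
    calc ∑ x : Fin d → K, χ (s * ((∑ j, a j * x j ^ 2) - t)) * χ (-(∑ i, x i * m i))
        = ∑ x : Fin d → K, χ (-(t * s)) * ∏ j, χ (s * a j * x j ^ 2 + -(m j) * x j) := by
          exact Finset.sum_congr rfl fun x _ => perx x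
      _ = χ (-(t * s)) * ∑ x : Fin d → K, ∏ j, χ (s * a j * x j ^ 2 + -(m j) * x j) := by
          rw [Finset.mul_sum]
      _ = χ (-(t * s)) * ∏ j, ∑ u : K, χ (s * a j * u ^ 2 + -(m j) * u) := by
          rw [hfub]
  have step4 : ∀ s : K, χ (-(t * s)) * ∏ j, ∑ u : K, χ (s * a j * u ^ 2 + -(m j) * u)
      = (∏ j, eta K (a j)) * G ^ d * (eta K s * χ (-t * s + B * s⁻¹)) := by
    intro s
    rcases eq_or_ne s 0 with hs | hs
    · -- s = 0 : both sides vanish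
      obtain ⟨j0, hj0⟩ : ∃ j0, m j0 ≠ 0 := by
        by_contra h
        push_neg at h
        exact hm (funext fun j => h j)
      have hz : ∏ j, ∑ u : K, χ (s * a j * u ^ 2 + -(m j) * u) = 0 := by
        refine Finset.prod_eq_zero (Finset.mem_univ j0) ?_
        have : ∑ u : K, χ (s * a j0 * u ^ 2 + -(m j0) * u) = ∑ u : K, χ (u * -(m j0)) := by
          refine Finset.sum_congr rfl fun u _ => ?_
          rw [hs]; ring_nf
        rw [this, AddChar.sum_mulShift _ hprim, if_neg (neg_ne_zero.mpr hj0)]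
        exact Nat.cast_zero
      rw [hz, hs, MulChar.map_zero, mul_zero, zero_mul, mul_zero]
    · -- s ≠ 0
      have hfac : ∀ j, ∑ u : K, χ (s * a j * u ^ 2 + -(m j) * u)
          = eta K (s * a j) * G * χ (-((m j) ^ 2 / (4 * (s * a j)))) := by
        intro j
        have hc : s * a j ≠ 0 := mul_ne_zero hs (ha j)
        have := sum_quad hK hχ hc (-(m j))
        rw [show (-(m j)) ^ 2 = (m j) ^ 2 from by ring, ← hGdef] at this
        exact this
      rw [Finset.prod_congr rfl (fun j _ => hfac j)]
      have hG_const : ∏ _j : Fin d, G = G ^ d := by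
        rw [Finset.prod_const, Finset.card_univ, Fintype.card_fin]
      have hA : ∏ j, eta K (s * a j) = (eta K s) ^ d * ∏ j, eta K (a j) := by
        calc ∏ j, eta K (s * a j)
            = ∏ j : Fin d, (eta K s * eta K (a j)) :=
              Finset.prod_congr rfl fun j _ => map_mul _ _ _
          _ = (∏ _j : Fin d, eta K s) * ∏ j, eta K (a j) := Finset.prod_mul_distrib
          _ = (eta K s) ^ d * ∏ j, eta K (a j) := by simp
      have hX : ∏ j, χ (-((m j) ^ 2 / (4 * (s * a j)))) = χ (B * s⁻¹) := by
        rw [← addChar_map_sum]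
        congr 1
        rw [hB, Finset.sum_mul]
        refine Finset.sum_congr rfl fun j _ => ?_
        field_simp
      have hprodsplit : ∏ j, (eta K (s * a j) * G * χ (-((m j) ^ 2 / (4 * (s * a j)))))
          = ((eta K s) ^ d * ∏ j, eta K (a j)) * G ^ d * χ (B * s⁻¹) := by
        rw [Finset.prod_mul_distrib, Finset.prod_mul_distrib, hA, hG_const, hX]
      have hcomb : χ (-(t * s)) * χ (B * s⁻¹) = χ (-t * s + B * s⁻¹) := by
        rw [← AddChar.map_add_eq_mul]; congr 1; ring
      rw [hprodsplit, eta_pow_odd hd0 hodd, ← hcomb]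
      ring
  rw [step1, step2]
  calc ∑ s : K, ∑ x : Fin d → K,
        χ (s * ((∑ j, a j * x j ^ 2) - t)) * χ (-(∑ i, x i * m i))
      = ∑ s : K, (∏ j, eta K (a j)) * G ^ d * (eta K s * χ (-t * s + B * s⁻¹)) :=
        Finset.sum_congr rfl fun s _ => (step3 s).trans (step4 s)
    _ = (∏ j, eta K (a j)) * G ^ d * ∑ s : K, eta K s * χ (-t * s + B * s⁻¹) := by
        rw [← Finset.mul_sum]

end Stmt14Aux
/-- In odd dimensions `d ≥ 3`, for `P(x) = ∑ a_j x_j²` with `a_j ≠ 0`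
over a finite field of odd characteristic, the varieties `V_t` satisfy
`|∑_{x ∈ V_t} χ(-x·m)| ≤ C q^{(d-1)/2}` for all `m ≠ 0` and ALL `t ∈ F_q`. -/
theorem stmt14 (d : ℕ) (hd : 3 ≤ d) (hodd : Odd d) :
    ∃ C : ℝ, 0 < C ∧
      ∀ (K : Type) [Field K] [Fintype K] [DecidableEq K],
        ringChar K ≠ 2 →
        ∀ a : Fin d → K, (∀ j, a j ≠ 0) →
        ∀ (χ : AddChar K ℂ), χ ≠ 1 →
        ∀ m : Fin d → K, m ≠ 0 → ∀ t : K,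
            ‖(∑ x ∈ Finset.univ.filter
                (fun x : Fin d → K => ∑ j, a j * x j ^ 2 = t),
              χ (-(∑ i, x i * m i)))‖ ≤
            C * (Fintype.card K : ℝ) ^ (((d : ℝ) - 1) / 2) := by
  refine ⟨2, by norm_num, ?_⟩
  intro K _ _ _ hK a ha χ hχ m hm t
  have hd0 : d ≠ 0 := by omega
  have hid := Stmt14Aux.key_identity hK hχ hd0 hodd a ha m hm t
  set q : ℝ := (Fintype.card K : ℝ) with hq
  have hq0 : (0:ℝ) < q := by
    rw [hq]; exact_mod_cast Fintype.card_pos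
  set S := ∑ x ∈ Finset.univ.filter
      (fun x : Fin d → K => ∑ j, a j * x j ^ 2 = t), χ (-(∑ i, x i * m i)) with hS
  have habs := congrArg (fun z : ℂ => ‖z‖) hid
  simp only [norm_mul, norm_pow, Complex.norm_natCast] at habs
  have hA : ‖∏ j, Stmt14Aux.eta K (a j)‖ = 1 := by
    rw [norm_prod]
    exact Finset.prod_eq_one fun j _ => Stmt14Aux.eta_abs_of_ne (ha j)
  have hGabs : ‖gaussSum (Stmt14Aux.eta K) χ‖ = Real.sqrt q :=
    Stmt14Aux.abs_gaussSum hK hχ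
  have hT := Stmt14Aux.salie hK hχ (∑ j, -((m j) ^ 2 / (4 * a j))) (-t)
  rw [hA, one_mul, hGabs] at habs
  have hbound : q * ‖S‖ ≤ Real.sqrt q ^ d * (2 * Real.sqrt q) := by
    rw [habs]
    exact mul_le_mul_of_nonneg_left hT (pow_nonneg (Real.sqrt_nonneg _) d)
  have key2 : Real.sqrt q ^ d * (2 * Real.sqrt q) = 2 * q ^ (((d:ℝ) + 1) / 2) := by
    rw [Real.sqrt_eq_rpow, ← Real.rpow_natCast (q ^ ((1:ℝ)/2)) d, ← Real.rpow_mul hq0.le,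
      mul_comm (q ^ ((1:ℝ)/2 * (d:ℕ))), mul_assoc, ← Real.rpow_add hq0]
    congr 1
    push_cast
    ring
  have h1 : q * ‖S‖ ≤ 2 * q ^ (((d:ℝ) + 1) / 2) := by
    rw [← key2]; exact hbound
  have h3 : q ^ (((d:ℝ) - 1) / 2) = q ^ (((d:ℝ) + 1) / 2) / q := by
    have h2 : (((d:ℝ) + 1) / 2) - 1 = ((d:ℝ) - 1) / 2 := by ring
    rw [← h2, Real.rpow_sub hq0, Real.rpow_one]
  rw [h3, ← mul_div_assoc, le_div_iff₀ hq0]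
  calc ‖S‖ * q = q * ‖S‖ := by ring
    _ ≤ 2 * q ^ (((d:ℝ) + 1) / 2) := h1
end
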